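/- The number of basketballs of order n equals (1/(3n+1)) * C(4n, n), i.e., the number of noncrossing partitions of {0,...,4n-1} into n blocks of size 4. -/

import Mathlib

open scoped Classical

def IsMatchingOn (M : Finset (Finset ℕ)) (S : Finset ℕ) : Prop :=
  (∀ b ∈ M, b.card = 2) ∧
  (∀ b ∈ M, ∀ b' ∈ M, b ≠ b' → Disjoint b b') ∧
  (∀ x, x ∈ S ↔ ∃ b ∈ M, x ∈ b)

def Cross (e o : Finset ℕ) : Prop :=
  (∃ i ∈ e, ∃ k ∈ e, ∃ j ∈ o, ∃ l ∈ o, i < j ∧ j < k ∧ k < l) ∨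
  (∃ i ∈ o, ∃ k ∈ o, ∃ j ∈ e, ∃ l ∈ e, i < j ∧ j < k ∧ k < l)

def IsNCMatchingOn (M : Finset (Finset ℕ)) (S : Finset ℕ) : Prop :=
  IsMatchingOn M S ∧ ∀ b ∈ M, ∀ b' ∈ M, b ≠ b' → ¬ Cross b b'

def En (n : ℕ) : Finset ℕ := (Finset.range (2 * n)).image (fun i => 2 * i)

def On (n : ℕ) : Finset ℕ := (Finset.range (2 * n)).image (fun i => 2 * i + 1)

def IsBasketball (n : ℕ) (Be Bo : Finset (Finset ℕ)) : Prop :=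
  IsNCMatchingOn Be (En n) ∧ IsNCMatchingOn Bo (On n) ∧
  ∀ e ∈ Be, (Bo.filter (fun o => Cross e o)).card = 1

def IsNCPartitionOn (Q : Finset (Finset ℕ)) (S : Finset ℕ) : Prop :=
  (∀ b ∈ Q, b.Nonempty) ∧
  (∀ b ∈ Q, ∀ b' ∈ Q, b ≠ b' → Disjoint b b') ∧
  (∀ x, x ∈ S ↔ ∃ b ∈ Q, x ∈ b) ∧
  (∀ b ∈ Q, ∀ b' ∈ Q, b ≠ b' → ¬ Cross b b')

noncomputable def basketballs (n : ℕ) : Finset (Finset (Finset ℕ) × Finset (Finset ℕ)) :=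
  ((Finset.range (4 * n)).powerset.powerset ×ˢ (Finset.range (4 * n)).powerset.powerset).filter
    (fun B => IsBasketball n B.1 B.2)

noncomputable def ncQuadPartitions (n : ℕ) : Finset (Finset (Finset ℕ)) :=
  (Finset.range (4 * n)).powerset.powerset.filter
    (fun Q => IsNCPartitionOn Q (Finset.range (4 * n)) ∧ Q.card = n ∧ ∀ b ∈ Q, b.card = 4)

/-! ### Part A definitions -/

def goodA (n : ℕ) (A : Finset ℕ) : Prop := ∀ t ≤ 4*n, t ≤ 4 * (A ∩ Finset.range t).card
noncomputable def GoodW (n : ℕ) : Finset (Finset ℕ) :=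
  ((Finset.range (4*n)).powersetCard n).filter (fun O => goodA n O)
def rotF (N k : ℕ) (A : Finset ℕ) : Finset ℕ := A.image (fun x => (x + k) % N)
noncomputable def Fc (N : ℕ) (A : Finset ℕ) (m : ℕ) : ℕ :=
  ((Finset.range m).filter (fun i => i % N ∈ A)).card
noncomputable def Sc (N : ℕ) (A : Finset ℕ) (m : ℕ) : ℤ := 4 * (Fc N A m : ℤ) - m
def GSd (N n : ℕ) (A : Finset ℕ) (j : ℕ) : Prop := ∀ t ≤ 4*n, Sc N A j ≤ Sc N A (j+t)

section cyc
variable (N : ℕ) (A : Finset ℕ)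


lemma Fc_succ (m : ℕ) : Fc N A (m+1) = Fc N A m + (if m % N ∈ A then 1 else 0) := by
  unfold Fc
  rw [Finset.range_add_one, Finset.filter_insert]
  split <;> simp [Finset.card_insert_of_notMem, Finset.notMem_range_self]

lemma Fc_base (hN : 0 < N) (hA : A ⊆ Finset.range N) : Fc N A N = A.card := by
  unfold Fc
  congr 1
  ext i
  simp only [Finset.mem_filter, Finset.mem_range]
  constructor
  · rintro ⟨hi, hm⟩; rwa [Nat.mod_eq_of_lt hi] at hm
  · intro hi
    have : i < N := Finset.mem_range.mp (hA hi)
    exact ⟨this, by rwa [Nat.mod_eq_of_lt this]⟩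

lemma Fc_period (hN : 0 < N) (hA : A ⊆ Finset.range N) (m : ℕ) :
    Fc N A (m + N) = Fc N A m + A.card := by
  induction m with
  | zero => simpa [Fc] using Fc_base N A hN hA
  | succ m ih =>
      have h1 : m + 1 + N = (m + N) + 1 := by ring
      rw [h1, Fc_succ, Fc_succ, ih, Nat.add_mod_right]
      ring
end cyc

section cyc2
variable (N : ℕ) (A : Finset ℕ)

lemma rot_mem (hN : 0 < N) (hA : A ⊆ Finset.range N) (k : ℕ) (hk : k < N) :
    ∀ x < N, (x ∈ rotF N k A ↔ (x + (N - k)) % N ∈ A) := by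
  intro x hx
  constructor
  · rintro hxr
    obtain ⟨a, ha, rfl⟩ := Finset.mem_image.mp hxr
    have ha' : a < N := Finset.mem_range.mp (hA ha)
    have : ((a + k) % N + (N - k)) % N = (a + k + (N - k)) % N := Nat.mod_add_mod _ _ _
    rw [this, show a + k + (N - k) = a + N by omega, Nat.add_mod_right,
      Nat.mod_eq_of_lt ha']
    exact ha
  · intro h
    refine Finset.mem_image.mpr ⟨(x + (N - k)) % N, h, ?_⟩
    have : ((x + (N - k)) % N + k) % N = (x + (N - k) + k) % N := Nat.mod_add_mod _ _ _
    rw [this, show x + (N - k) + k = x + N by omega, Nat.add_mod_right, Nat.mod_eq_of_lt hx]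

lemma rot_count (hN : 0 < N) (hA : A ⊆ Finset.range N) (k t : ℕ) (hk : k < N) (ht : t ≤ N) :
    (rotF N k A ∩ Finset.range t).card + Fc N A (N - k) = Fc N A ((N - k) + t) := by
  set j := N - k with hj
  have hmem := rot_mem N A hN hA k hk
  have h1 : rotF N k A ∩ Finset.range t = (Finset.range t).filter (fun x => (x + j) % N ∈ A) := by
    ext x
    simp only [Finset.mem_inter, Finset.mem_range, Finset.mem_filter]
    constructor
    · rintro ⟨h1, h2⟩; exact ⟨h2, (hmem x (lt_of_lt_of_le h2 ht)).mp h1⟩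
    · rintro ⟨h1, h2⟩; exact ⟨(hmem x (lt_of_lt_of_le h1 ht)).mpr h2, h1⟩
  have h2 : ((Finset.range t).filter (fun x => (x + j) % N ∈ A)).card
      = ((Finset.Ico j (j + t)).filter (fun i => i % N ∈ A)).card := by
    apply Finset.card_bij (fun x _ => x + j)
    · intro x hx
      simp only [Finset.mem_filter, Finset.mem_range] at hx
      simp only [Finset.mem_filter, Finset.mem_Ico]
      exact ⟨⟨by omega, by omega⟩, hx.2⟩
    · intro a _ b _ h; omega
    · intro b hb
      simp only [Finset.mem_filter, Finset.mem_Ico] at hb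
      refine ⟨b - j, ?_, by omega⟩
      simp only [Finset.mem_filter, Finset.mem_range]
      exact ⟨by omega, by rw [show b - j + j = b by omega]; exact hb.2⟩
  have h3 : ((Finset.Ico j (j+t)).filter (fun i => i % N ∈ A)).card + Fc N A j
      = Fc N A (j + t) := by
    unfold Fc
    rw [add_comm, ← Finset.card_union_of_disjoint, ← Finset.filter_union]
    · congr 1
      rw [Finset.range_eq_Ico, Finset.range_eq_Ico]
      congr 1
      exact Finset.Ico_union_Ico_eq_Ico (by omega) (by omega)
    · exact Finset.disjoint_filter_filter (by
        simp only [Finset.disjoint_left, Finset.mem_range, Finset.mem_Ico]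
        intro a ha; omega)
  rw [h1, h2, h3]
end cyc2

section gs
variable {N n : ℕ} {A : Finset ℕ}


theorem Sc_period (hN : N = 4*n+1) (hA : A ⊆ Finset.range N) (hc : A.card = n) (m : ℕ) :
    Sc N A (m + N) = Sc N A m - 1 := by
  unfold Sc
  rw [Fc_period N A (by omega) hA, hc]
  push_cast
  omega

theorem GS_exists_unique (hN : N = 4*n+1) (hA : A ⊆ Finset.range N) (hc : A.card = n) :
    ∃ j < N, GSd N n A j ∧ ∀ j' < N, GSd N n A j' → j' = j := by
  have hN0 : 0 < N := by omega
  obtain ⟨j₁, hj₁, hmin⟩ := Finset.exists_min_image (Finset.range N) (Sc N A)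
    ⟨0, Finset.mem_range.mpr hN0⟩
  set T := (Finset.range N).filter (fun j => ∀ i ∈ Finset.range N, Sc N A j ≤ Sc N A i) with hT
  have hTne : T.Nonempty := ⟨j₁, Finset.mem_filter.mpr ⟨hj₁, hmin⟩⟩
  set j := T.min' hTne with hjdef
  have hjT : j ∈ T := Finset.min'_mem _ _
  obtain ⟨hjN, hjmin⟩ := Finset.mem_filter.mp hjT
  have hjN' : j < N := Finset.mem_range.mp hjN
  have hstrict : ∀ i < j, Sc N A j < Sc N A i := by
    intro i hi
    have hiN : i ∈ Finset.range N := Finset.mem_range.mpr (by omega)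
    have h1 : Sc N A j ≤ Sc N A i := hjmin i hiN
    rcases lt_or_eq_of_le h1 with h | h
    · exact h
    · exfalso
      have : i ∈ T := Finset.mem_filter.mpr ⟨hiN, by intro i' hi'; rw [← h]; exact hjmin i' hi'⟩
      have := Finset.min'_le T i this
      omega
  have hGS : GSd N n A j := by
    intro t ht
    rcases Nat.lt_or_ge (j + t) N with h | h
    · exact hjmin _ (Finset.mem_range.mpr h)
    · have hi : j + t - N < j := by omega
      have h2 : Sc N A (j + t) = Sc N A (j + t - N) - 1 := by
        have := Sc_period hN hA hc (j + t - N)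
        rwa [show j + t - N + N = j + t by omega] at this
      have := hstrict _ hi
      omega
  refine ⟨j, hjN', hGS, ?_⟩
  -- uniqueness
  have key : ∀ a b, a < b → b < N → GSd N n A a → GSd N n A b → False := by
    intro a b hab hbN ha hb
    have h1 : Sc N A a ≤ Sc N A b := by
      have := ha (b - a) (by omega)
      rwa [show a + (b - a) = b by omega] at this
    have h2 : Sc N A b ≤ Sc N A (a + N) := by
      have := hb (N - (b - a)) (by omega)
      rwa [show b + (N - (b - a)) = a + N by omega] at this
    have h3 := Sc_period hN hA hc a
    omega
  intro j' hj' hGS'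
  rcases lt_trichotomy j' j with h | h | h
  · exact absurd (key j' j h hjN' hGS' hGS) (not_false)
  · exact h
  · exact absurd (key j j' h hj' hGS hGS') (not_false)
end gs

section pa
variable {N n : ℕ} {A : Finset ℕ}

theorem rot_card (hN : 0 < N) (hA : A ⊆ Finset.range N) (k : ℕ) :
    (rotF N k A).card = A.card := by
  apply Finset.card_image_of_injOn
  intro x hx y hy h
  have hx' : x < N := Finset.mem_range.mp (hA hx)
  have hy' : y < N := Finset.mem_range.mp (hA hy)
  have h2 : x % N = y % N := Nat.ModEq.add_right_cancel' k h
  rwa [Nat.mod_eq_of_lt hx', Nat.mod_eq_of_lt hy'] at h2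

theorem rot_subset (hN : 0 < N) (k : ℕ) : rotF N k A ⊆ Finset.range N := by
  intro x hx
  obtain ⟨a, _, rfl⟩ := Finset.mem_image.mp hx
  exact Finset.mem_range.mpr (Nat.mod_lt _ hN)

theorem rot_rot (hN : 0 < N) (hA : A ⊆ Finset.range N) {a b : ℕ} (hab : (a + b) % N = 0) :
    rotF N a (rotF N b A) = A := by
  unfold rotF
  rw [Finset.image_image]
  have : ∀ x ∈ A, ((x + b) % N + a) % N = x := by
    intro x hx
    have hx' : x < N := Finset.mem_range.mp (hA hx)
    rw [Nat.mod_add_mod, show x + b + a = x + (a + b) by ring, Nat.add_mod, hab,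
      Nat.add_zero, Nat.mod_mod, Nat.mod_eq_of_lt hx']
  calc A.image _ = A.image id := Finset.image_congr (by intro x hx; exact this x hx)
    _ = A := Finset.image_id

theorem GS_N_iff_zero (hN : N = 4*n+1) (hA : A ⊆ Finset.range N) (hc : A.card = n) :
    GSd N n A N ↔ GSd N n A 0 := by
  have hp := Sc_period hN hA hc
  constructor <;> intro h t ht
  · have h1 := h t ht
    have h2 := hp 0
    have h3 := hp t
    simp only [Nat.zero_add] at *
    rw [show N + t = t + N by ring] at h1
    omega
  · have h1 := h t ht
    have h3 := hp t
    have h2 := hp 0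
    simp only [Nat.zero_add] at *
    rw [show N + t = t + N by ring]
    omega

theorem bridge (hN : N = 4*n+1) (hA : A ⊆ Finset.range N) (hc : A.card = n)
    (k : ℕ) (hk : k < N) : goodA n (rotF N k A) ↔ GSd N n A (N - k) := by
  have hN0 : 0 < N := by omega
  constructor
  · intro h t ht
    have hcnt := rot_count N A hN0 hA k t hk (by omega)
    have := h t ht
    unfold Sc
    push_cast
    omega
  · intro h t ht
    have hcnt := rot_count N A hN0 hA k t hk (by omega)
    have := h t ht
    unfold Sc at this
    push_cast at this
    omega

theorem good_unrot (hN : N = 4*n+1) (hA : A ⊆ Finset.range N) (hc : A.card = n)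
    (k : ℕ) (hk : k < N) : goodA n (rotF N ((N - k) % N) A) ↔ GSd N n A k := by
  rcases Nat.eq_zero_or_pos k with rfl | hk0
  · rw [Nat.sub_zero, Nat.mod_self]
    have := bridge hN hA hc 0 (by omega)
    rw [Nat.sub_zero] at this
    rw [this]
    exact GS_N_iff_zero hN hA hc
  · have h1 : (N - k) % N = N - k := Nat.mod_eq_of_lt (by omega)
    rw [h1, bridge hN hA hc (N - k) (by omega), show N - (N - k) = k by omega]

theorem good_subset_range (h : goodA n A) (hc : A.card = n) : A ⊆ Finset.range (4*n) := by
  have h1 := h (4*n) le_rfl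
  have h2 : (A ∩ Finset.range (4*n)).card ≤ A.card := Finset.card_le_card Finset.inter_subset_left
  have h3 : A ∩ Finset.range (4*n) = A := by
    apply Finset.eq_of_subset_of_card_le Finset.inter_subset_left
    omega
  rw [← h3]
  exact Finset.inter_subset_right

theorem partA (n : ℕ) : (GoodW n).card * (4*n+1) = (4*n+1).choose n := by
  set N := 4*n+1 with hNdef
  have hN0 : 0 < N := by omega
  have hchoose : ((Finset.range N).powersetCard n).card = N.choose n := by
    rw [Finset.card_powersetCard, Finset.card_range]
  rw [← hchoose]
  have hbij : (GoodW n ×ˢ Finset.range N).card = ((Finset.range N).powersetCard n).card := by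
    apply Finset.card_bij (fun p _ => rotF N p.2 p.1)
    · rintro ⟨G, k⟩ hp
      rw [Finset.mem_product] at hp
      obtain ⟨hG, hk⟩ := hp
      rw [GoodW, Finset.mem_filter, Finset.mem_powersetCard] at hG
      obtain ⟨⟨hGsub, hGcard⟩, hGgood⟩ := hG
      rw [Finset.mem_powersetCard]
      have hGsub' : G ⊆ Finset.range N := hGsub.trans (Finset.range_subset_range.mpr (by omega))
      exact ⟨rot_subset hN0 _, by rw [rot_card hN0 hGsub']; exact hGcard⟩
    · rintro ⟨G, k⟩ hp ⟨G', k'⟩ hp' heq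
      rw [Finset.mem_product] at hp hp'
      obtain ⟨hG, hk⟩ := hp
      obtain ⟨hG', hk'⟩ := hp'
      rw [GoodW, Finset.mem_filter, Finset.mem_powersetCard] at hG hG'
      obtain ⟨⟨hGsub, hGcard⟩, hGgood⟩ := hG
      obtain ⟨⟨hGsub', hGcard'⟩, hGgood'⟩ := hG'
      have hkN : k < N := Finset.mem_range.mp hk
      have hkN' : k' < N := Finset.mem_range.mp hk'
      have hGr : G ⊆ Finset.range N := hGsub.trans (Finset.range_subset_range.mpr (by omega))
      have hGr' : G' ⊆ Finset.range N := hGsub'.trans (Finset.range_subset_range.mpr (by omega))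
      set B := rotF N k G with hB
      have hBsub : B ⊆ Finset.range N := rot_subset hN0 _
      have hBcard : B.card = n := by rw [hB, rot_card hN0 hGr]; exact hGcard
      have hinv : rotF N ((N - k) % N) B = G := by
        apply rot_rot hN0 hGr
        rw [Nat.mod_add_mod, show N - k + k = N by omega, Nat.mod_self]
      have hinv' : rotF N ((N - k') % N) B = G' := by
        rw [heq]
        apply rot_rot hN0 hGr'
        rw [Nat.mod_add_mod, show N - k' + k' = N by omega, Nat.mod_self]
      have hGSk : GSd N n B k := by
        rw [← good_unrot rfl hBsub hBcard k hkN, hinv]; exact hGgood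
      have hGSk' : GSd N n B k' := by
        rw [← good_unrot rfl hBsub hBcard k' hkN', hinv']; exact hGgood'
      obtain ⟨j, hj, hGSj, huniq⟩ := GS_exists_unique rfl hBsub hBcard
      have e1 : k = j := huniq k hkN hGSk
      have e2 : k' = j := huniq k' hkN' hGSk'
      have ekk : k = k' := by omega
      subst ekk
      have : G = G' := by rw [← hinv, ← hinv']
      rw [this]
    · intro B hB
      rw [Finset.mem_powersetCard] at hB
      obtain ⟨hBsub, hBcard⟩ := hB
      obtain ⟨j, hjN, hGSj, _⟩ := GS_exists_unique rfl hBsub hBcard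
      set κ := (N - j) % N with hκ
      have hκN : κ < N := Nat.mod_lt _ hN0
      set G := rotF N κ B with hG
      have hGgood : goodA n G := (good_unrot rfl hBsub hBcard j hjN).mpr hGSj
      have hGcard : G.card = n := by rw [hG, rot_card hN0 hBsub, hBcard]
      have hGsub : G ⊆ Finset.range (4*n) := good_subset_range hGgood hGcard
      set k := (N - κ) % N with hk
      have hkN : k < N := Nat.mod_lt _ hN0
      refine ⟨⟨G, k⟩, ?_, ?_⟩
      · rw [Finset.mem_product]
        refine ⟨?_, Finset.mem_range.mpr hkN⟩
        rw [GoodW, Finset.mem_filter, Finset.mem_powersetCard]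
        exact ⟨⟨hGsub, hGcard⟩, hGgood⟩
      · show rotF N k G = B
        rw [hG]
        apply rot_rot hN0 hBsub
        rw [hk, Nat.mod_add_mod, show N - κ + κ = N by omega, Nat.mod_self]

  rw [Finset.card_product, Finset.card_range] at hbij
  omega


end pa

theorem cross_symm {a b : Finset ℕ} (h : Cross a b) : Cross b a := Or.symm h

theorem cross_mono {a b A B : Finset ℕ} (ha : a ⊆ A) (hb : b ⊆ B) (h : Cross a b) :
    Cross A B := by
  rcases h with ⟨i, hi, k, hk, j, hj, l, hl, h1, h2, h3⟩ | ⟨i, hi, k, hk, j, hj, l, hl, h1, h2, h3⟩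
  · exact Or.inl ⟨i, ha hi, k, ha hk, j, hb hj, l, hb hl, h1, h2, h3⟩
  · exact Or.inr ⟨i, hb hi, k, hb hk, j, ha hj, l, ha hl, h1, h2, h3⟩

theorem cross_image_iff {f : ℕ → ℕ} {S : Set ℕ} {a b : Finset ℕ}
    (hf : ∀ x ∈ S, ∀ y ∈ S, (x < y ↔ f x < f y)) (ha : ↑a ⊆ S) (hb : ↑b ⊆ S) :
    Cross (a.image f) (b.image f) ↔ Cross a b := by
  constructor
  · rintro (⟨i, hi, k, hk, j, hj, l, hl, h1, h2, h3⟩ | ⟨i, hi, k, hk, j, hj, l, hl, h1, h2, h3⟩)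
    · obtain ⟨i', hi', rfl⟩ := Finset.mem_image.mp hi
      obtain ⟨k', hk', rfl⟩ := Finset.mem_image.mp hk
      obtain ⟨j', hj', rfl⟩ := Finset.mem_image.mp hj
      obtain ⟨l', hl', rfl⟩ := Finset.mem_image.mp hl
      exact Or.inl ⟨i', hi', k', hk', j', hj', l', hl',
        (hf _ (ha hi') _ (hb hj')).mpr h1, (hf _ (hb hj') _ (ha hk')).mpr h2,
        (hf _ (ha hk') _ (hb hl')).mpr h3⟩
    · obtain ⟨i', hi', rfl⟩ := Finset.mem_image.mp hi
      obtain ⟨k', hk', rfl⟩ := Finset.mem_image.mp hk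
      obtain ⟨j', hj', rfl⟩ := Finset.mem_image.mp hj
      obtain ⟨l', hl', rfl⟩ := Finset.mem_image.mp hl
      exact Or.inr ⟨i', hi', k', hk', j', hj', l', hl',
        (hf _ (hb hi') _ (ha hj')).mpr h1, (hf _ (ha hj') _ (hb hk')).mpr h2,
        (hf _ (hb hk') _ (ha hl')).mpr h3⟩
  · rintro (⟨i, hi, k, hk, j, hj, l, hl, h1, h2, h3⟩ | ⟨i, hi, k, hk, j, hj, l, hl, h1, h2, h3⟩)
    · exact Or.inl ⟨f i, Finset.mem_image_of_mem f hi, f k, Finset.mem_image_of_mem f hk,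
        f j, Finset.mem_image_of_mem f hj, f l, Finset.mem_image_of_mem f hl,
        (hf _ (ha hi) _ (hb hj)).mp h1, (hf _ (hb hj) _ (ha hk)).mp h2,
        (hf _ (ha hk) _ (hb hl)).mp h3⟩
    · exact Or.inr ⟨f i, Finset.mem_image_of_mem f hi, f k, Finset.mem_image_of_mem f hk,
        f j, Finset.mem_image_of_mem f hj, f l, Finset.mem_image_of_mem f hl,
        (hf _ (hb hi) _ (ha hj)).mp h1, (hf _ (ha hj) _ (hb hk)).mp h2,
        (hf _ (hb hk) _ (ha hl)).mp h3⟩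

/-- min of a finset, 0 for empty -/
noncomputable def minD (b : Finset ℕ) : ℕ := if h : b.Nonempty then b.min' h else 0

theorem minD_mem {b : Finset ℕ} (h : b.Nonempty) : minD b ∈ b := by
  rw [minD, dif_pos h]; exact b.min'_mem h

theorem minD_le {b : Finset ℕ} {x : ℕ} (hx : x ∈ b) : minD b ≤ x := by
  rw [minD, dif_pos ⟨x, hx⟩]; exact b.min'_le x hx

theorem minD_eq_of {b : Finset ℕ} {m : ℕ} (hm : m ∈ b) (hle : ∀ x ∈ b, m ≤ x) :
    minD b = m := le_antisymm (minD_le hm) (hle _ (minD_mem ⟨m, hm⟩))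

theorem minD_image {f : ℕ → ℕ} {S : Set ℕ} {b : Finset ℕ}
    (hf : ∀ x ∈ S, ∀ y ∈ S, (x < y ↔ f x < f y)) (hb : ↑b ⊆ S) (hne : b.Nonempty) :
    minD (b.image f) = f (minD b) := by
  apply minD_eq_of (Finset.mem_image_of_mem f (minD_mem hne))
  intro y hy
  obtain ⟨x, hx, rfl⟩ := Finset.mem_image.mp hy
  rcases eq_or_lt_of_le (minD_le hx) with h | h
  · rw [h]
  · exact le_of_lt ((hf _ (hb (Finset.mem_coe.mpr (minD_mem hne))) _ (hb hx)).mp h)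

/-- minima of blocks of a partition -/
noncomputable def minsQ (Q : Finset (Finset ℕ)) : Finset ℕ := Q.image minD

theorem mem_ncQuad {n : ℕ} {Q : Finset (Finset ℕ)} : Q ∈ ncQuadPartitions n ↔
    (∀ b ∈ Q, b ⊆ Finset.range (4*n)) ∧ IsNCPartitionOn Q (Finset.range (4*n)) ∧
    Q.card = n ∧ ∀ b ∈ Q, b.card = 4 := by
  unfold ncQuadPartitions
  rw [Finset.mem_filter, Finset.mem_powerset]
  constructor
  · rintro ⟨h1, h2⟩
    exact ⟨fun b hb => Finset.mem_powerset.mp (h1 hb), h2⟩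
  · rintro ⟨h1, h2⟩
    exact ⟨fun b hb => Finset.mem_powerset.mpr (h1 b hb), h2⟩

theorem mem_GoodW {n : ℕ} {O : Finset ℕ} : O ∈ GoodW n ↔
    O ⊆ Finset.range (4*n) ∧ O.card = n ∧ goodA n O := by
  unfold GoodW
  rw [Finset.mem_filter, Finset.mem_powersetCard]
  tauto

theorem minD_injOn {Q : Finset (Finset ℕ)} (hne : ∀ b ∈ Q, b.Nonempty)
    (hdisj : ∀ b ∈ Q, ∀ b' ∈ Q, b ≠ b' → Disjoint b b') :
    ∀ b ∈ Q, ∀ b' ∈ Q, minD b = minD b' → b = b' := by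
  intro b hb b' hb' h
  by_contra hne'
  have h1 : minD b ∈ b := minD_mem (hne b hb)
  have h2 : minD b ∈ b' := h ▸ minD_mem (hne b' hb')
  exact (Finset.disjoint_left.mp (hdisj b hb b' hb' hne') h1) h2

theorem minsQ_card {Q : Finset (Finset ℕ)} (hne : ∀ b ∈ Q, b.Nonempty)
    (hdisj : ∀ b ∈ Q, ∀ b' ∈ Q, b ≠ b' → Disjoint b b') : (minsQ Q).card = Q.card :=
  Finset.card_image_of_injOn (minD_injOn hne hdisj)

theorem mins_mem_GoodW {n : ℕ} {Q : Finset (Finset ℕ)} (hQ : Q ∈ ncQuadPartitions n) :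
    minsQ Q ∈ GoodW n := by
  obtain ⟨hsub, ⟨hne, hdisj, hcover, hnc⟩, hcard, h4⟩ := mem_ncQuad.mp hQ
  rw [mem_GoodW]
  refine ⟨?_, by rw [minsQ_card hne hdisj, hcard], ?_⟩
  · intro m hm
    obtain ⟨b, hb, rfl⟩ := Finset.mem_image.mp hm
    exact hsub b hb (minD_mem (hne b hb))
  · intro t ht
    set Qt := Q.filter (fun b => minD b < t) with hQt
    have hsub1 : Finset.range t ⊆ Qt.biUnion id := by
      intro x hx
      have hx' : x ∈ Finset.range (4*n) := Finset.mem_range.mpr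
        (lt_of_lt_of_le (Finset.mem_range.mp hx) ht)
      obtain ⟨b, hb, hxb⟩ := (hcover x).mp hx'
      refine Finset.mem_biUnion.mpr ⟨b, Finset.mem_filter.mpr ⟨hb, ?_⟩, hxb⟩
      exact lt_of_le_of_lt (minD_le hxb) (Finset.mem_range.mp hx)
    have hc1 : t ≤ 4 * Qt.card := by
      calc t = (Finset.range t).card := (Finset.card_range t).symm
        _ ≤ (Qt.biUnion id).card := Finset.card_le_card hsub1
        _ ≤ ∑ b ∈ Qt, b.card := by
              apply le_trans (Finset.card_biUnion_le)
              simp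
        _ ≤ ∑ _b ∈ Qt, 4 := Finset.sum_le_sum (fun b hb => le_of_eq (h4 b (Finset.mem_filter.mp hb).1))
        _ = 4 * Qt.card := by rw [Finset.sum_const, smul_eq_mul, mul_comm]
    have hc2 : minsQ Q ∩ Finset.range t = Qt.image minD := by
      ext m
      simp only [Finset.mem_inter, Finset.mem_image, Finset.mem_range, minsQ, hQt,
        Finset.mem_filter]
      constructor
      · rintro ⟨⟨b, hb, rfl⟩, hlt⟩; exact ⟨b, ⟨hb, hlt⟩, rfl⟩
      · rintro ⟨b, ⟨hb, hlt⟩, rfl⟩; exact ⟨⟨b, hb, rfl⟩, hlt⟩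
    rw [hc2, Finset.card_image_of_injOn (fun b hb b' hb' h =>
      minD_injOn hne hdisj b (Finset.mem_filter.mp hb).1 b' (Finset.mem_filter.mp hb').1 h)]
    exact hc1

theorem max_block_interval {n : ℕ} {Q : Finset (Finset ℕ)} (hQ : Q ∈ ncQuadPartitions n)
    {p : ℕ} {b : Finset ℕ} (hb : b ∈ Q) (hmin : minD b = p)
    (hmax : ∀ m ∈ minsQ Q, m ≤ p) : b = Finset.Icc p (p+3) := by
  obtain ⟨hsub, ⟨hne, hdisj, hcover, hnc⟩, hcard, h4⟩ := mem_ncQuad.mp hQ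
  have hbne : b.Nonempty := hne b hb
  have hpb : p ∈ b := hmin ▸ minD_mem hbne
  have hple : ∀ x ∈ b, p ≤ x := fun x hx => hmin ▸ minD_le hx
  have claim : ∀ i, i ≤ 3 → Finset.Icc p (p+i) ⊆ b := by
    intro i
    induction i with
    | zero => intro _ x hx
              rw [Finset.mem_Icc] at hx
              have : x = p := by omega
              rwa [this]
    | succ i ih =>
        intro hi3
        have hprev : Finset.Icc p (p+i) ⊆ b := ih (by omega)
        by_cases hin : p + (i+1) ∈ b
        · intro x hx
          rw [Finset.mem_Icc] at hx
          rcases Nat.lt_or_ge x (p+i+1) with h | h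
          · exact hprev (Finset.mem_Icc.mpr ⟨hx.1, by omega⟩)
          · have : x = p + (i+1) := by omega
            rwa [this]
        · exfalso
          -- find q ∈ b with q > p+i+1
          have hq : ∃ q ∈ b, p + i + 1 < q := by
            have hns : ¬ b ⊆ Finset.Icc p (p+i) := by
              intro hss
              have := Finset.card_le_card hss
              rw [h4 b hb, Nat.card_Icc] at this
              omega
            obtain ⟨q, hqb, hqn⟩ := Finset.not_subset.mp hns
            rw [Finset.mem_Icc] at hqn
            refine ⟨q, hqb, ?_⟩
            have h1 := hple q hqb
            have h2 : q ≠ p + (i+1) := fun h => hin (h ▸ hqb)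
            omega
          obtain ⟨q, hqb, hq1⟩ := hq
          -- p+i+1 is in the ground set
          have hrange : p + (i+1) ∈ Finset.range (4*n) := by
            have := Finset.mem_range.mp (hsub b hb hqb)
            exact Finset.mem_range.mpr (by omega)
          obtain ⟨b', hb', hxb'⟩ := (hcover _).mp hrange
          have hbb' : b ≠ b' := fun h => hin (h ▸ hxb')
          have hm : minD b' < p := by
            have h1 : minD b' ≤ p := hmax _ (Finset.mem_image_of_mem minD hb')
            rcases lt_or_eq_of_le h1 with h | h
            · exact h
            · exfalso
              have : p ∈ b' := h ▸ minD_mem (hne b' hb')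
              exact (Finset.disjoint_left.mp (hdisj b hb b' hb' hbb') hpb) this
          apply hnc b' hb' b hb (Ne.symm hbb')
          exact Or.inl ⟨minD b', minD_mem (hne b' hb'), p + (i+1), hxb',
            p + i, hprev (Finset.mem_Icc.mpr ⟨by omega, by omega⟩), q, hqb,
            by omega, by omega, by omega⟩
  have h1 : Finset.Icc p (p+3) ⊆ b := claim 3 le_rfl
  symm
  apply Finset.eq_of_subset_of_card_le h1
  rw [h4 b hb, Nat.card_Icc]
  omega

-- shifting maps
def sdw (p x : ℕ) : ℕ := if x < p then x else x - 4
def sup' (p x : ℕ) : ℕ := if x < p then x else x + 4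
def Sp (p : ℕ) : Set ℕ := {x | x < p ∨ p + 4 ≤ x}

theorem sup_mono (p : ℕ) : ∀ x ∈ (Set.univ : Set ℕ), ∀ y ∈ (Set.univ : Set ℕ),
    (x < y ↔ sup' p x < sup' p y) := by
  intro x _ y _; unfold sup'; split_ifs <;> omega

theorem sdw_mono (p : ℕ) : ∀ x ∈ Sp p, ∀ y ∈ Sp p, (x < y ↔ sdw p x < sdw p y) := by
  intro x hx y hy
  simp only [Sp, Set.mem_setOf_eq] at hx hy
  unfold sdw; split_ifs <;> omega

theorem sdw_sup (p x : ℕ) : sdw p (sup' p x) = x := by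
  unfold sdw sup'; split_ifs <;> omega

theorem sup_mem_Sp (p x : ℕ) : sup' p x ∈ Sp p := by
  unfold sup' Sp; split_ifs <;> simp <;> omega

theorem sup_sdw {p x : ℕ} (hx : x ∈ Sp p) : sup' p (sdw p x) = x := by
  simp only [Sp, Set.mem_setOf_eq] at hx
  unfold sdw sup'; split_ifs <;> omega

theorem max_min_le {n : ℕ} {Q : Finset (Finset ℕ)} (hQ : Q ∈ ncQuadPartitions (n+1))
    {p : ℕ} (hp : p ∈ minsQ Q) (hmax : ∀ m ∈ minsQ Q, m ≤ p) : p ≤ 4*n := by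
  have hG := mins_mem_GoodW hQ
  rw [mem_GoodW] at hG
  obtain ⟨hsub, hcard, hgood⟩ := hG
  have hpr : p < 4*(n+1) := Finset.mem_range.mp (hsub hp)
  have h1 := hgood p (by omega)
  have h2 : minsQ Q ∩ Finset.range p = (minsQ Q).erase p := by
    ext x
    simp only [Finset.mem_inter, Finset.mem_range, Finset.mem_erase]
    constructor
    · rintro ⟨h3, h4⟩; exact ⟨by omega, h3⟩
    · rintro ⟨h3, h4⟩
      have := hmax x h4
      exact ⟨h4, by omega⟩
  rw [h2, Finset.card_erase_of_mem hp, hcard] at h1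
  omega

section red
variable {n : ℕ} {Q : Finset (Finset ℕ)} {p : ℕ}

theorem red_spec (hQ : Q ∈ ncQuadPartitions (n+1)) (hp : p ∈ minsQ Q)
    (hmax : ∀ m ∈ minsQ Q, m ≤ p) :
    Finset.Icc p (p+3) ∈ Q ∧
    ((Q.erase (Finset.Icc p (p+3))).image (fun b => b.image (sdw p)) ∈ ncQuadPartitions n) ∧
    minsQ ((Q.erase (Finset.Icc p (p+3))).image (fun b => b.image (sdw p)))
      = (minsQ Q).erase p ∧
    Q = insert (Finset.Icc p (p+3))
      ((((Q.erase (Finset.Icc p (p+3))).image (fun b => b.image (sdw p)))).image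
        (fun b => b.image (sup' p))) := by
  obtain ⟨hsub, ⟨hne, hdisj, hcover, hnc⟩, hcard, h4⟩ := mem_ncQuad.mp hQ
  obtain ⟨b₀, hb₀, hmin₀⟩ := Finset.mem_image.mp hp
  have hI : b₀ = Finset.Icc p (p+3) := max_block_interval hQ hb₀ hmin₀ hmax
  set I := Finset.Icc p (p+3) with hIdef
  have hIQ : I ∈ Q := hI ▸ hb₀
  have hminI : minD I = p := by
    apply minD_eq_of (Finset.mem_Icc.mpr ⟨le_rfl, by omega⟩)
    intro x hx; exact (Finset.mem_Icc.mp hx).1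
  have hple : p ≤ 4*n := max_min_le hQ hp hmax
  set E := Q.erase I with hE
  -- elements of blocks in E lie in Sp p
  have hES : ∀ b ∈ E, ↑b ⊆ Sp p := by
    intro b hb x hx
    obtain ⟨hbne', hbQ⟩ := Finset.mem_erase.mp hb
    have hdj := hdisj b hbQ I hIQ hbne'
    have : x ∉ I := Finset.disjoint_left.mp hdj hx
    rw [hIdef, Finset.mem_Icc] at this
    simp only [Sp, Set.mem_setOf_eq]
    omega
  have hEmin : ∀ b ∈ E, minD b < p := by
    intro b hb
    obtain ⟨hbne', hbQ⟩ := Finset.mem_erase.mp hb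
    have h1 : minD b ≤ p := hmax _ (Finset.mem_image_of_mem minD hbQ)
    rcases lt_or_eq_of_le h1 with h | h
    · exact h
    · exfalso
      have h2 : minD b ∈ b := minD_mem (hne b hbQ)
      have := hES b hb (Finset.mem_coe.mpr h2)
      simp only [Sp, Set.mem_setOf_eq, h] at this
      omega
  have hsdw_injOn : ∀ x ∈ Sp p, ∀ y ∈ Sp p, sdw p x = sdw p y → x = y := by
    intro x hx y hy h
    simp only [Sp, Set.mem_setOf_eq] at hx hy
    unfold sdw at h; split_ifs at h <;> omega
  have him_eq : ∀ b ∈ E, ∀ b' ∈ E, b.image (sdw p) = b'.image (sdw p) → b = b' := by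
    intro b hb b' hb' h
    apply Finset.Subset.antisymm <;> intro x hx
    · have : sdw p x ∈ b'.image (sdw p) := h ▸ Finset.mem_image_of_mem _ hx
      obtain ⟨y, hy, hxy⟩ := Finset.mem_image.mp this
      exact hsdw_injOn y (hES b' hb' hy) x (hES b hb hx) hxy ▸ hy
    · have : sdw p x ∈ b.image (sdw p) := h.symm ▸ Finset.mem_image_of_mem _ hx
      obtain ⟨y, hy, hxy⟩ := Finset.mem_image.mp this
      exact hsdw_injOn y (hES b hb hy) x (hES b' hb' hx) hxy ▸ hy
  set R := E.image (fun b => b.image (sdw p)) with hR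
  have hRcard : R.card = n := by
    rw [hR, Finset.card_image_of_injOn him_eq, hE, Finset.card_erase_of_mem hIQ, hcard]
    omega
  have hRsub : ∀ B ∈ R, B ⊆ Finset.range (4*n) := by
    intro B hB x hx
    obtain ⟨b, hb, rfl⟩ := Finset.mem_image.mp hB
    obtain ⟨y, hy, rfl⟩ := Finset.mem_image.mp hx
    have h1 := hES b hb hy
    have h2 : y < 4*(n+1) :=
      Finset.mem_range.mp (hsub b (Finset.mem_erase.mp hb).2 hy)
    simp only [Sp, Set.mem_setOf_eq] at h1
    rw [Finset.mem_range]
    unfold sdw; split_ifs <;> omega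
  have hRcard4 : ∀ B ∈ R, B.card = 4 := by
    intro B hB
    obtain ⟨b, hb, rfl⟩ := Finset.mem_image.mp hB
    rw [Finset.card_image_of_injOn (fun x hx y hy h =>
      hsdw_injOn x (hES b hb hx) y (hES b hb hy) h)]
    exact h4 b (Finset.mem_erase.mp hb).2
  have hRne : ∀ B ∈ R, B.Nonempty := by
    intro B hB
    rw [← Finset.card_pos, hRcard4 B hB]; omega
  have hRdisj : ∀ B ∈ R, ∀ B' ∈ R, B ≠ B' → Disjoint B B' := by
    intro B hB B' hB' hBB'
    obtain ⟨b, hb, rfl⟩ := Finset.mem_image.mp hB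
    obtain ⟨b', hb', rfl⟩ := Finset.mem_image.mp hB'
    have hbb' : b ≠ b' := fun h => hBB' (by rw [h])
    have hdj := hdisj b (Finset.mem_erase.mp hb).2 b' (Finset.mem_erase.mp hb').2 hbb'
    rw [Finset.disjoint_left]
    intro z hz hz'
    obtain ⟨x, hx, rfl⟩ := Finset.mem_image.mp hz
    obtain ⟨y, hy, hxy⟩ := Finset.mem_image.mp hz'
    have := hsdw_injOn y (hES b' hb' hy) x (hES b hb hx) hxy
    subst this
    exact (Finset.disjoint_left.mp hdj hx) hy
  have hRcover : ∀ x, x ∈ Finset.range (4*n) ↔ ∃ B ∈ R, x ∈ B := by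
    intro x
    constructor
    · intro hx
      have hx' : x < 4*n := Finset.mem_range.mp hx
      have hy : sup' p x ∈ Finset.range (4*(n+1)) := by
        rw [Finset.mem_range]; unfold sup'; split_ifs <;> omega
      obtain ⟨b, hb, hxb⟩ := (hcover _).mp hy
      have hbI : b ≠ I := by
        intro h
        subst h
        have := Finset.mem_Icc.mp hxb
        have := sup_mem_Sp p x
        simp only [Sp, Set.mem_setOf_eq] at this
        omega
      have hbE : b ∈ E := Finset.mem_erase.mpr ⟨hbI, hb⟩
      refine ⟨b.image (sdw p), Finset.mem_image_of_mem _ hbE, ?_⟩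
      have : x = sdw p (sup' p x) := (sdw_sup p x).symm
      rw [this]
      exact Finset.mem_image_of_mem _ hxb
    · rintro ⟨B, hB, hxB⟩
      exact hRsub B hB hxB
  have hRnc : ∀ B ∈ R, ∀ B' ∈ R, B ≠ B' → ¬ Cross B B' := by
    intro B hB B' hB' hBB' hcr
    obtain ⟨b, hb, rfl⟩ := Finset.mem_image.mp hB
    obtain ⟨b', hb', rfl⟩ := Finset.mem_image.mp hB'
    have hbb' : b ≠ b' := fun h => hBB' (by rw [h])
    rw [cross_image_iff (sdw_mono p) (hES b hb) (hES b' hb')] at hcr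
    exact hnc b (Finset.mem_erase.mp hb).2 b' (Finset.mem_erase.mp hb').2 hbb' hcr
  have hRmem : R ∈ ncQuadPartitions n :=
    mem_ncQuad.mpr ⟨hRsub, ⟨hRne, hRdisj, hRcover, hRnc⟩, hRcard, hRcard4⟩
  have hRmins : minsQ R = (minsQ Q).erase p := by
    have h1 : minsQ R = E.image minD := by
      rw [hR, minsQ, Finset.image_image]
      apply Finset.image_congr
      intro b hb
      simp only [Function.comp_apply]
      rw [minD_image (sdw_mono p) (hES b hb) (hne b (Finset.mem_erase.mp hb).2)]
      have := hEmin b hb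
      unfold sdw; split_ifs <;> omega
    rw [h1]
    ext x
    simp only [Finset.mem_image, Finset.mem_erase, minsQ, hE]
    constructor
    · rintro ⟨b, ⟨hbI, hbQ⟩, rfl⟩
      have hbE : b ∈ E := Finset.mem_erase.mpr ⟨hbI, hbQ⟩
      refine ⟨?_, ⟨b, hbQ, rfl⟩⟩
      have := hEmin b hbE
      omega
    · rintro ⟨hxp, b, hbQ, rfl⟩
      refine ⟨b, ⟨?_, hbQ⟩, rfl⟩
      intro h
      exact hxp (h ▸ hminI)
  refine ⟨hIQ, hRmem, hRmins, ?_⟩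
  have hrec : R.image (fun b => b.image (sup' p)) = E := by
    rw [hR, Finset.image_image]
    have : ∀ b ∈ E, ((fun b => Finset.image (sup' p) b) ∘ fun b => Finset.image (sdw p) b) b
        = id b := by
      intro b hb
      simp only [Function.comp_apply, id_eq]
      rw [Finset.image_image]
      calc b.image (fun x => sup' p (sdw p x)) = b.image id := Finset.image_congr (by
            intro x hx
            simp only [id_eq]
            exact sup_sdw (hES b hb hx))
        _ = b := Finset.image_id
    rw [Finset.image_congr this, Finset.image_id]
  rw [hrec, hE, Finset.insert_erase hIQ]
end red

section ext
variable {n : ℕ} {Q' : Finset (Finset ℕ)} {p : ℕ}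

theorem ext_spec (hQ' : Q' ∈ ncQuadPartitions n) (hple : p ≤ 4*n)
    (hmins : ∀ m ∈ minsQ Q', m < p) :
    insert (Finset.Icc p (p+3)) (Q'.image (fun b => b.image (sup' p))) ∈ ncQuadPartitions (n+1) ∧
    minsQ (insert (Finset.Icc p (p+3)) (Q'.image (fun b => b.image (sup' p))))
      = insert p (minsQ Q') := by
  obtain ⟨hsub, ⟨hne, hdisj, hcover, hnc⟩, hcard, h4⟩ := mem_ncQuad.mp hQ'
  set I := Finset.Icc p (p+3) with hIdef
  have hsup_inj : ∀ x y : ℕ, sup' p x = sup' p y → x = y := by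
    intro x y h; unfold sup' at h; split_ifs at h <;> omega
  have hQ'min : ∀ b ∈ Q', minD b < p := fun b hb =>
    hmins _ (Finset.mem_image_of_mem minD hb)
  have hnotI : ∀ (x : ℕ), sup' p x ∉ I := by
    intro x h
    rw [hIdef, Finset.mem_Icc] at h
    unfold sup' at h; split_ifs at h <;> omega
  have himg_ne_I : ∀ b ∈ Q', b.image (sup' p) ≠ I := by
    intro b hb h
    obtain ⟨x, hx⟩ := hne b hb
    exact hnotI x (h ▸ Finset.mem_image_of_mem _ hx)
  have him_inj : ∀ b ∈ Q', ∀ b' ∈ Q', b.image (sup' p) = b'.image (sup' p) → b = b' := by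
    intro b _ b' _ h
    apply Finset.Subset.antisymm <;> intro x hx
    · have : sup' p x ∈ b'.image (sup' p) := h ▸ Finset.mem_image_of_mem _ hx
      obtain ⟨y, hy, hxy⟩ := Finset.mem_image.mp this
      exact hsup_inj y x hxy ▸ hy
    · have : sup' p x ∈ b.image (sup' p) := h.symm ▸ Finset.mem_image_of_mem _ hx
      obtain ⟨y, hy, hxy⟩ := Finset.mem_image.mp this
      exact hsup_inj y x hxy ▸ hy
  set T := insert I (Q'.image (fun b => b.image (sup' p))) with hT
  have hTsub : ∀ B ∈ T, B ⊆ Finset.range (4*(n+1)) := by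
    intro B hB x hx
    rw [Finset.mem_range]
    rcases Finset.mem_insert.mp hB with rfl | hB'
    · rw [Finset.mem_Icc] at hx; omega
    · obtain ⟨b, hb, rfl⟩ := Finset.mem_image.mp hB'
      obtain ⟨y, hy, rfl⟩ := Finset.mem_image.mp hx
      have : y < 4*n := Finset.mem_range.mp (hsub b hb hy)
      unfold sup'; split_ifs <;> omega
  have hT4 : ∀ B ∈ T, B.card = 4 := by
    intro B hB
    rcases Finset.mem_insert.mp hB with rfl | hB'
    · rw [hIdef, Nat.card_Icc]; omega
    · obtain ⟨b, hb, rfl⟩ := Finset.mem_image.mp hB'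
      rw [Finset.card_image_of_injective _ (fun x y => hsup_inj x y), h4 b hb]
  have hTne : ∀ B ∈ T, B.Nonempty := by
    intro B hB; rw [← Finset.card_pos, hT4 B hB]; omega
  have hTdisj : ∀ B ∈ T, ∀ B' ∈ T, B ≠ B' → Disjoint B B' := by
    have key : ∀ b ∈ Q', Disjoint I (b.image (sup' p)) := by
      intro b _
      rw [Finset.disjoint_right]
      intro x hx
      obtain ⟨y, _, rfl⟩ := Finset.mem_image.mp hx
      exact hnotI y
    intro B hB B' hB' hBB'
    rcases Finset.mem_insert.mp hB with rfl | h1 <;> rcases Finset.mem_insert.mp hB' with rfl | h2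
    · exact absurd rfl hBB'
    · obtain ⟨b, hb, rfl⟩ := Finset.mem_image.mp h2; exact key b hb
    · obtain ⟨b, hb, rfl⟩ := Finset.mem_image.mp h1; exact (key b hb).symm
    · obtain ⟨b, hb, rfl⟩ := Finset.mem_image.mp h1
      obtain ⟨b', hb', rfl⟩ := Finset.mem_image.mp h2
      have hbb' : b ≠ b' := fun h => hBB' (by rw [h])
      rw [Finset.disjoint_left]
      intro z hz hz'
      obtain ⟨x, hx, rfl⟩ := Finset.mem_image.mp hz
      obtain ⟨y, hy, hxy⟩ := Finset.mem_image.mp hz'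
      have := hsup_inj y x hxy
      subst this
      exact (Finset.disjoint_left.mp (hdisj b hb b' hb' hbb') hx) hy
  have hTcover : ∀ x, x ∈ Finset.range (4*(n+1)) ↔ ∃ B ∈ T, x ∈ B := by
    intro x
    constructor
    · intro hx
      have hx' : x < 4*(n+1) := Finset.mem_range.mp hx
      by_cases hxI : x ∈ I
      · exact ⟨I, Finset.mem_insert_self _ _, hxI⟩
      · rw [hIdef, Finset.mem_Icc] at hxI
        have hxS : x < p ∨ p + 4 ≤ x := by omega
        have h1 : sdw p x < 4*n := by unfold sdw; split_ifs <;> omega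
        obtain ⟨b, hb, hxb⟩ := (hcover _).mp (Finset.mem_range.mpr h1)
        refine ⟨b.image (sup' p), Finset.mem_insert_of_mem (Finset.mem_image_of_mem _ hb), ?_⟩
        have : x = sup' p (sdw p x) := (sup_sdw (by simpa [Sp] using hxS)).symm
        rw [this]
        exact Finset.mem_image_of_mem _ hxb
    · rintro ⟨B, hB, hxB⟩
      exact hTsub B hB hxB
  have hTnc : ∀ B ∈ T, ∀ B' ∈ T, B ≠ B' → ¬ Cross B B' := by
    -- crossing with the interval I is impossible for blocks avoiding I
    have keyI : ∀ B, Disjoint I B → ¬ Cross I B := by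
      intro B hdj hcr
      rcases hcr with ⟨i, hi, k, hk, j, hj, l, hl, h1, h2, h3⟩ |
        ⟨i, hi, k, hk, j, hj, l, hl, h1, h2, h3⟩
      · rw [hIdef, Finset.mem_Icc] at hi hk
        have hjI : j ∈ I := by rw [hIdef, Finset.mem_Icc]; omega
        exact (Finset.disjoint_left.mp hdj hjI) hj
      · rw [hIdef, Finset.mem_Icc] at hj hl
        have hkI : k ∈ I := by rw [hIdef, Finset.mem_Icc]; omega
        exact (Finset.disjoint_left.mp hdj hkI) hk
    intro B hB B' hB' hBB' hcr
    rcases Finset.mem_insert.mp hB with rfl | h1 <;> rcases Finset.mem_insert.mp hB' with rfl | h2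
    · exact hBB' rfl
    · obtain ⟨b, hb, rfl⟩ := Finset.mem_image.mp h2
      exact keyI _ (by
        rw [Finset.disjoint_right]; intro x hx
        obtain ⟨y, _, rfl⟩ := Finset.mem_image.mp hx
        exact hnotI y) hcr
    · obtain ⟨b, hb, rfl⟩ := Finset.mem_image.mp h1
      exact keyI _ (by
        rw [Finset.disjoint_right]; intro x hx
        obtain ⟨y, _, rfl⟩ := Finset.mem_image.mp hx
        exact hnotI y) (Or.symm hcr)
    · obtain ⟨b, hb, rfl⟩ := Finset.mem_image.mp h1
      obtain ⟨b', hb', rfl⟩ := Finset.mem_image.mp h2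
      have hbb' : b ≠ b' := fun h => hBB' (by rw [h])
      rw [cross_image_iff (sup_mono p) (by intro x _; trivial) (by intro x _; trivial)] at hcr
      exact hnc b hb b' hb' hbb' hcr
  have hTcard : T.card = n + 1 := by
    rw [hT, Finset.card_insert_of_notMem, Finset.card_image_of_injOn him_inj, hcard]
    intro h
    obtain ⟨b, hb, hbI⟩ := Finset.mem_image.mp h
    exact himg_ne_I b hb hbI
  have hTmem : T ∈ ncQuadPartitions (n+1) :=
    mem_ncQuad.mpr ⟨hTsub, ⟨hTne, hTdisj, hTcover, hTnc⟩, hTcard, hT4⟩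
  refine ⟨hTmem, ?_⟩
  have hminI : minD I = p := by
    apply minD_eq_of (Finset.mem_Icc.mpr ⟨le_rfl, by omega⟩)
    intro x hx; exact (Finset.mem_Icc.mp hx).1
  rw [hT, minsQ, Finset.image_insert, hminI]
  congr 1
  rw [Finset.image_image]
  apply Finset.image_congr
  intro b hb
  simp only [Function.comp_apply]
  rw [minD_image (sup_mono p) (by intro x _; trivial) (hne b hb)]
  have := hQ'min b hb
  unfold sup'; split_ifs <;> omega
end ext

theorem partB_inj : ∀ n : ℕ, ∀ Q Q' : Finset (Finset ℕ), Q ∈ ncQuadPartitions n →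
    Q' ∈ ncQuadPartitions n → minsQ Q = minsQ Q' → Q = Q' := by
  intro n
  induction n with
  | zero =>
      intro Q Q' hQ hQ' _
      have h1 : Q.card = 0 := (mem_ncQuad.mp hQ).2.2.1
      have h2 : Q'.card = 0 := (mem_ncQuad.mp hQ').2.2.1
      rw [Finset.card_eq_zero.mp h1, Finset.card_eq_zero.mp h2]
  | succ n ih =>
      intro Q Q' hQ hQ' hmins
      have hOQ := mins_mem_GoodW hQ
      rw [mem_GoodW] at hOQ
      have hOne : (minsQ Q).Nonempty := by
        rw [← Finset.card_pos, hOQ.2.1]; omega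
      set p := (minsQ Q).max' hOne with hp
      have hpm : p ∈ minsQ Q := Finset.max'_mem _ _
      have hmax : ∀ m ∈ minsQ Q, m ≤ p := fun m hm => Finset.le_max' _ _ hm
      have hpm' : p ∈ minsQ Q' := hmins ▸ hpm
      have hmax' : ∀ m ∈ minsQ Q', m ≤ p := fun m hm => hmax m (hmins ▸ hm)
      obtain ⟨_, hR, hRm, hrec⟩ := red_spec hQ hpm hmax
      obtain ⟨_, hR', hRm', hrec'⟩ := red_spec hQ' hpm' hmax'
      have heq : (Q.erase (Finset.Icc p (p+3))).image (fun b => b.image (sdw p))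
          = (Q'.erase (Finset.Icc p (p+3))).image (fun b => b.image (sdw p)) := by
        apply ih _ _ hR hR'
        rw [hRm, hRm', hmins]
      rw [hrec, hrec', heq]

theorem partB_surj : ∀ n : ℕ, ∀ O ∈ GoodW n, ∃ Q ∈ ncQuadPartitions n, minsQ Q = O := by
  intro n
  induction n with
  | zero =>
      intro O hO
      have h1 : O.card = 0 := (mem_GoodW.mp hO).2.1
      refine ⟨∅, ?_, ?_⟩
      · rw [mem_ncQuad]
        refine ⟨by simp, ⟨by simp, by simp, by simp, by simp⟩, by simp, by simp⟩
      · rw [Finset.card_eq_zero.mp h1]; rfl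
  | succ n ih =>
      intro O hO
      obtain ⟨hOsub, hOcard, hOgood⟩ := mem_GoodW.mp hO
      have hOne : O.Nonempty := by rw [← Finset.card_pos, hOcard]; omega
      set p := O.max' hOne with hp
      have hpm : p ∈ O := Finset.max'_mem _ _
      have hmax : ∀ m ∈ O, m ≤ p := fun m hm => Finset.le_max' _ _ hm
      have hpr : p < 4*(n+1) := Finset.mem_range.mp (hOsub hpm)
      have hOint : O ∩ Finset.range p = O.erase p := by
        ext x
        simp only [Finset.mem_inter, Finset.mem_range, Finset.mem_erase]
        constructor
        · rintro ⟨h3, h4⟩; exact ⟨by omega, h3⟩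
        · rintro ⟨h3, h4⟩; have := hmax x h4; exact ⟨h4, by omega⟩
      have hple : p ≤ 4*n := by
        have h1 := hOgood p (by omega)
        rw [hOint, Finset.card_erase_of_mem hpm, hOcard] at h1
        omega
      set O' := O.erase p with hO'
      have hO'mem : O' ∈ GoodW n := by
        rw [mem_GoodW]
        refine ⟨?_, by rw [hO', Finset.card_erase_of_mem hpm, hOcard]; omega, ?_⟩
        · intro x hx
          obtain ⟨hxp, hxO⟩ := Finset.mem_erase.mp hx
          have := hmax x hxO
          exact Finset.mem_range.mpr (by omega)
        · intro t ht
          rcases le_or_gt t p with h | h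
          · have : O' ∩ Finset.range t = O ∩ Finset.range t := by
              ext x
              simp only [hO', Finset.mem_inter, Finset.mem_erase, Finset.mem_range]
              constructor
              · rintro ⟨⟨_, h2⟩, h3⟩; exact ⟨h2, h3⟩
              · rintro ⟨h2, h3⟩; exact ⟨⟨by omega, h2⟩, h3⟩
            rw [this]
            exact hOgood t (by omega)
          · have : O' ∩ Finset.range t = O' := by
              apply Finset.inter_eq_left.mpr
              intro x hx
              obtain ⟨hxp, hxO⟩ := Finset.mem_erase.mp hx
              have := hmax x hxO
              exact Finset.mem_range.mpr (by omega)
            rw [this, hO', Finset.card_erase_of_mem hpm, hOcard]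
            simp only [Nat.add_sub_cancel]
            omega
      obtain ⟨Q', hQ', hQ'mins⟩ := ih O' hO'mem
      have hminslt : ∀ m ∈ minsQ Q', m < p := by
        intro m hm
        rw [hQ'mins] at hm
        obtain ⟨hmp, hmO⟩ := Finset.mem_erase.mp hm
        have := hmax m hmO
        omega
      obtain ⟨hTmem, hTmins⟩ := ext_spec hQ' hple hminslt
      refine ⟨_, hTmem, ?_⟩
      rw [hTmins, hQ'mins, hO', Finset.insert_erase hpm]

theorem partB (n : ℕ) : (ncQuadPartitions n).card = (GoodW n).card := by
  apply Finset.card_bij (fun Q _ => minsQ Q)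
  · intro Q hQ; exact mins_mem_GoodW hQ
  · intro Q hQ Q' hQ' h; exact partB_inj n Q Q' hQ hQ' h
  · intro O hO
    obtain ⟨Q, hQ, hm⟩ := partB_surj n O hO
    exact ⟨Q, hQ, hm⟩

theorem mem_En {n x : ℕ} : x ∈ En n ↔ x < 4*n ∧ x % 2 = 0 := by
  unfold En
  simp only [Finset.mem_image, Finset.mem_range]
  constructor
  · rintro ⟨i, hi, rfl⟩; omega
  · rintro ⟨h1, h2⟩; exact ⟨x / 2, by omega, by omega⟩

theorem mem_On {n x : ℕ} : x ∈ On n ↔ x < 4*n ∧ x % 2 = 1 := by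
  unfold On
  simp only [Finset.mem_image, Finset.mem_range]
  constructor
  · rintro ⟨i, hi, rfl⟩; omega
  · rintro ⟨h1, h2⟩; exact ⟨x / 2, by omega, by omega⟩

theorem En_card (n : ℕ) : (En n).card = 2*n := by
  unfold En
  rw [Finset.card_image_of_injective _ (fun a b h => by omega), Finset.card_range]

theorem On_card (n : ℕ) : (On n).card = 2*n := by
  unfold On
  rw [Finset.card_image_of_injective _ (fun a b h => by omega), Finset.card_range]

theorem mem_basketballs {n : ℕ} {p : Finset (Finset ℕ) × Finset (Finset ℕ)} :
    p ∈ basketballs n ↔ (∀ b ∈ p.1, b ⊆ Finset.range (4*n)) ∧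
      (∀ b ∈ p.2, b ⊆ Finset.range (4*n)) ∧ IsBasketball n p.1 p.2 := by
  unfold basketballs
  rw [Finset.mem_filter, Finset.mem_product, Finset.mem_powerset, Finset.mem_powerset]
  constructor
  · rintro ⟨⟨h1, h2⟩, h3⟩
    exact ⟨fun b hb => Finset.mem_powerset.mp (h1 hb),
      fun b hb => Finset.mem_powerset.mp (h2 hb), h3⟩
  · rintro ⟨h1, h2, h3⟩
    exact ⟨⟨fun b hb => Finset.mem_powerset.mpr (h1 b hb),
      fun b hb => Finset.mem_powerset.mpr (h2 b hb)⟩, h3⟩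

theorem matching_card {M : Finset (Finset ℕ)} {S : Finset ℕ} (h : IsMatchingOn M S) :
    S.card = 2 * M.card := by
  obtain ⟨h2, hdisj, hcover⟩ := h
  have hS : S = M.biUnion (fun b => b) := by
    ext x
    rw [Finset.mem_biUnion]
    exact hcover x
  rw [hS, Finset.card_biUnion (fun b hb b' hb' hne => hdisj b hb b' hb' hne)]
  rw [Finset.sum_congr rfl (fun b hb => h2 b hb), Finset.sum_const, smul_eq_mul, mul_comm]

theorem pair_rep {b : Finset ℕ} (h : b.card = 2) : ∃ i k, i < k ∧ b = {i, k} := by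
  obtain ⟨i, k, hik, rfl⟩ := Finset.card_eq_two.mp h
  rcases Nat.lt_or_ge i k with h' | h'
  · exact ⟨i, k, h', rfl⟩
  · exact ⟨k, i, by omega, Finset.pair_comm i k⟩

theorem cross_pair_iff {a b c d : ℕ} (hab : a < b) (hcd : c < d) :
    Cross {a, b} {c, d} ↔ (a < c ∧ c < b ∧ b < d) ∨ (c < a ∧ a < d ∧ d < b) := by
  unfold Cross
  simp only [Finset.exists_mem_insert, Finset.mem_singleton, exists_eq_left]
  constructor
  · rintro (h | h) <;> omega
  · rintro (h | h)
    · exact Or.inl (by omega)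
    · exact Or.inr (by omega)

theorem even_sum {s : Finset (Finset ℕ)} {f : Finset ℕ → ℕ} (h : ∀ i ∈ s, Even (f i)) :
    Even (∑ i ∈ s, f i) := by
  induction s using Finset.cons_induction with
  | empty => simp
  | cons a s ha ih =>
      rw [Finset.sum_cons]
      exact Even.add (h a (Finset.mem_cons_self a s)) (ih (fun i hi => h i (Finset.mem_cons.mpr (Or.inr hi))))

theorem sum_eq_card_forces {s : Finset (Finset ℕ)} {f : Finset ℕ → ℕ}
    (h1 : ∀ i ∈ s, 1 ≤ f i) (h2 : ∑ i ∈ s, f i = s.card) : ∀ i ∈ s, f i = 1 := by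
  by_contra hc
  push_neg at hc
  obtain ⟨i, hi, hfi⟩ := hc
  have : s.card = ∑ _i ∈ s, 1 := by rw [Finset.sum_const, smul_eq_mul, mul_one]
  have hlt : ∑ _i ∈ s, 1 < ∑ i ∈ s, f i := by
    apply Finset.sum_lt_sum h1
    exact ⟨i, hi, by have := h1 i hi; omega⟩
  omega


/-- pure arithmetic core of "interleaved quadruples don't cross" -/
theorem quad_arith {x1 x2 x3 x4 y1 y2 y3 y4 i j k l : ℕ}
    (hx : x1 < x2 ∧ x2 < x3 ∧ x3 < x4) (hy : y1 < y2 ∧ y2 < y3 ∧ y3 < y4)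
    (h11 : ¬ ((x1 < y1 ∧ y1 < x3 ∧ x3 < y3) ∨ (y1 < x1 ∧ x1 < y3 ∧ y3 < x3)))
    (h12 : ¬ ((x1 < y2 ∧ y2 < x3 ∧ x3 < y4) ∨ (y2 < x1 ∧ x1 < y4 ∧ y4 < x3)))
    (h21 : ¬ ((x2 < y1 ∧ y1 < x4 ∧ x4 < y3) ∨ (y1 < x2 ∧ x2 < y3 ∧ y3 < x4)))
    (h22 : ¬ ((x2 < y2 ∧ y2 < x4 ∧ x4 < y4) ∨ (y2 < x2 ∧ x2 < y4 ∧ y4 < x4)))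
    (hi : i = x1 ∨ i = x2 ∨ i = x3 ∨ i = x4) (hk : k = x1 ∨ k = x2 ∨ k = x3 ∨ k = x4)
    (hj : j = y1 ∨ j = y2 ∨ j = y3 ∨ j = y4) (hl : l = y1 ∨ l = y2 ∨ l = y3 ∨ l = y4)
    (hij : i < j) (hjk : j < k) (hkl : k < l) : False := by
  omega

theorem cross_not_symm {a b : Finset ℕ} (h : ¬ Cross a b) : ¬ Cross b a :=
  fun hc => h (Or.symm hc)

theorem half_noncross {e o e' o' : Finset ℕ}
    (he : e.card = 2) (ho : o.card = 2) (he' : e'.card = 2) (ho' : o'.card = 2)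
    (hcr : Cross e o) (hcr' : Cross e' o')
    (h1 : ¬Cross e e') (h2 : ¬Cross e o') (h3 : ¬Cross o e') (h4 : ¬Cross o o') :
    ∀ i ∈ e ∪ o, ∀ k ∈ e ∪ o, ∀ j ∈ e' ∪ o', ∀ l ∈ e' ∪ o',
      i < j → j < k → k < l → False := by
  obtain ⟨a1, a2, ha, rfl⟩ := pair_rep he
  obtain ⟨c1, c2, hc, rfl⟩ := pair_rep ho
  obtain ⟨b1, b2, hb, rfl⟩ := pair_rep he'
  obtain ⟨d1, d2, hd, rfl⟩ := pair_rep ho'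
  rw [cross_pair_iff ha hc] at hcr
  rw [cross_pair_iff hb hd] at hcr'
  have A1 : ¬((a1 < b1 ∧ b1 < a2 ∧ a2 < b2) ∨ (b1 < a1 ∧ a1 < b2 ∧ b2 < a2)) :=
    fun hx => h1 ((cross_pair_iff ha hb).mpr hx)
  have A2 : ¬((a1 < d1 ∧ d1 < a2 ∧ a2 < d2) ∨ (d1 < a1 ∧ a1 < d2 ∧ d2 < a2)) :=
    fun hx => h2 ((cross_pair_iff ha hd).mpr hx)
  have A3 : ¬((c1 < b1 ∧ b1 < c2 ∧ c2 < b2) ∨ (b1 < c1 ∧ c1 < b2 ∧ b2 < c2)) :=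
    fun hx => h3 ((cross_pair_iff hc hb).mpr hx)
  have A4 : ¬((c1 < d1 ∧ d1 < c2 ∧ c2 < d2) ∨ (d1 < c1 ∧ c1 < d2 ∧ d2 < c2)) :=
    fun hx => h4 ((cross_pair_iff hc hd).mpr hx)
  intro i hi k hk j hj l hl hij hjk hkl
  have hi' : i = a1 ∨ i = a2 ∨ i = c1 ∨ i = c2 := by
    simp only [Finset.mem_union, Finset.mem_insert, Finset.mem_singleton] at hi; omega
  have hk' : k = a1 ∨ k = a2 ∨ k = c1 ∨ k = c2 := by
    simp only [Finset.mem_union, Finset.mem_insert, Finset.mem_singleton] at hk; omega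
  have hj' : j = b1 ∨ j = b2 ∨ j = d1 ∨ j = d2 := by
    simp only [Finset.mem_union, Finset.mem_insert, Finset.mem_singleton] at hj; omega
  have hl' : l = b1 ∨ l = b2 ∨ l = d1 ∨ l = d2 := by
    simp only [Finset.mem_union, Finset.mem_insert, Finset.mem_singleton] at hl; omega
  rcases hcr with hA | hB <;> rcases hcr' with hA' | hB'
  · exact quad_arith (x1 := a1) (x2 := c1) (x3 := a2) (x4 := c2)
      (y1 := b1) (y2 := d1) (y3 := b2) (y4 := d2)
      ⟨hA.1, hA.2.1, hA.2.2⟩ ⟨hA'.1, hA'.2.1, hA'.2.2⟩ A1 A2 A3 A4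
      (by omega) (by omega) (by omega) (by omega) hij hjk hkl
  · exact quad_arith (x1 := a1) (x2 := c1) (x3 := a2) (x4 := c2)
      (y1 := d1) (y2 := b1) (y3 := d2) (y4 := b2)
      ⟨hA.1, hA.2.1, hA.2.2⟩ ⟨hB'.1, hB'.2.1, hB'.2.2⟩ A2 A1 A4 A3
      (by omega) (by omega) (by omega) (by omega) hij hjk hkl
  · exact quad_arith (x1 := c1) (x2 := a1) (x3 := c2) (x4 := a2)
      (y1 := b1) (y2 := d1) (y3 := b2) (y4 := d2)
      ⟨hB.1, hB.2.1, hB.2.2⟩ ⟨hA'.1, hA'.2.1, hA'.2.2⟩ A3 A4 A1 A2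
      (by omega) (by omega) (by omega) (by omega) hij hjk hkl
  · exact quad_arith (x1 := c1) (x2 := a1) (x3 := c2) (x4 := a2)
      (y1 := d1) (y2 := b1) (y3 := d2) (y4 := b2)
      ⟨hB.1, hB.2.1, hB.2.2⟩ ⟨hB'.1, hB'.2.1, hB'.2.2⟩ A4 A3 A2 A1
      (by omega) (by omega) (by omega) (by omega) hij hjk hkl

theorem union_noncross {e o e' o' : Finset ℕ}
    (he : e.card = 2) (ho : o.card = 2) (he' : e'.card = 2) (ho' : o'.card = 2)
    (hcr : Cross e o) (hcr' : Cross e' o')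
    (h1 : ¬Cross e e') (h2 : ¬Cross e o') (h3 : ¬Cross o e') (h4 : ¬Cross o o') :
    ¬ Cross (e ∪ o) (e' ∪ o') := by
  rintro (⟨i, hi, k, hk, j, hj, l, hl, hij, hjk, hkl⟩ | ⟨i, hi, k, hk, j, hj, l, hl, hij, hjk, hkl⟩)
  · exact half_noncross he ho he' ho' hcr hcr' h1 h2 h3 h4 i hi k hk j hj l hl hij hjk hkl
  · exact half_noncross he' ho' he ho hcr' hcr (cross_not_symm h1) (cross_not_symm h3)
      (cross_not_symm h2) (cross_not_symm h4) i hi k hk j hj l hl hij hjk hkl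

section crossed
variable {n : ℕ} {Be Bo : Finset (Finset ℕ)}

theorem o_crossed (hbb : IsBasketball n Be Bo) :
    ∀ o ∈ Bo, 1 ≤ (Be.filter (fun e => Cross e o)).card := by
  obtain ⟨⟨⟨hc2e, hdisje, hcove⟩, hnce⟩, ⟨⟨hc2o, hdisjo, hcovo⟩, hnco⟩, hcr1⟩ := hbb
  intro o ho
  obtain ⟨j, l, hjl, rfl⟩ := pair_rep (hc2o _ ho)
  have hjOn : j ∈ On n := (hcovo j).mpr ⟨_, ho, by simp⟩
  have hlOn : l ∈ On n := (hcovo l).mpr ⟨_, ho, by simp⟩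
  rw [mem_On] at hjOn hlOn
  -- odds strictly between j and l
  set Od := On n ∩ Finset.Ioo j l with hOd
  set Ev := En n ∩ Finset.Ioo j l with hEv
  have hOdeq : Od = (Bo.filter (fun b => b ⊆ Finset.Ioo j l)).biUnion (fun b => b) := by
    ext x
    simp only [hOd, Finset.mem_inter, Finset.mem_biUnion, Finset.mem_filter]
    constructor
    · rintro ⟨hx1, hx2⟩
      obtain ⟨b, hb, hxb⟩ := (hcovo x).mp hx1
      have hxIoo := Finset.mem_Ioo.mp hx2
      have hbo : b ≠ ({j, l} : Finset ℕ) := by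
        rintro rfl
        simp only [Finset.mem_insert, Finset.mem_singleton] at hxb
        omega
      refine ⟨b, ⟨hb, ?_⟩, hxb⟩
      intro y hyb
      rw [Finset.mem_Ioo]
      have hdj := hdisjo b hb _ ho hbo
      have hyj : y ≠ j := by
        intro h; exact (Finset.disjoint_left.mp hdj (h ▸ hyb)) (by simp)
      have hyl : y ≠ l := by
        intro h; exact (Finset.disjoint_left.mp hdj (h ▸ hyb)) (by simp)
      by_contra hy
      rw [not_and_or, not_lt, not_lt] at hy
      apply hnco b hb _ ho hbo
      rcases hy with hy | hy
      · -- y ≤ j, so y < j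
        exact Or.inl ⟨y, hyb, x, hxb, j, by simp, l, by simp, by omega, by omega, by omega⟩
      · -- l ≤ y, so l < y
        exact Or.inr ⟨j, by simp, l, by simp, x, hxb, y, hyb, by omega, by omega, by omega⟩
    · rintro ⟨b, ⟨hb, hbsub⟩, hxb⟩
      refine ⟨(hcovo x).mpr ⟨b, hb, hxb⟩, hbsub hxb⟩
  have hOdcardEven : Even Od.card := by
    rw [hOdeq, Finset.card_biUnion]
    · apply even_sum
      intro b hb
      rw [hc2o b (Finset.mem_filter.mp hb).1]
      exact even_two
    · intro b hb b' hb' hne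
      exact hdisjo b (Finset.mem_filter.mp hb).1 b' (Finset.mem_filter.mp hb').1 hne
  have hEvcard : Ev.card = Od.card + 1 := by
    have hEveq : Ev = insert (j+1) (Od.image (· + 1)) := by
      ext y
      simp only [hEv, hOd, Finset.mem_inter, Finset.mem_insert, Finset.mem_image,
        Finset.mem_Ioo, mem_En, mem_On]
      constructor
      · rintro ⟨⟨hy4, hy2⟩, hy5, hy6⟩
        by_cases hyj : y = j + 1
        · exact Or.inl hyj
        · exact Or.inr ⟨y - 1, ⟨⟨by omega, by omega⟩, by omega, by omega⟩, by omega⟩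
      · rintro (rfl | ⟨x, ⟨⟨hx4, hx2⟩, hx5, hx6⟩, rfl⟩)
        · refine ⟨⟨by omega, by omega⟩, by omega, by omega⟩
        · exact ⟨⟨by omega, by omega⟩, by omega, by omega⟩
    rw [hEveq, Finset.card_insert_of_notMem, Finset.card_image_of_injective _
      (fun a b h => by omega)]
    intro h
    obtain ⟨x, hx, hx1⟩ := Finset.mem_image.mp h
    have := (Finset.mem_Ioo.mp (Finset.mem_inter.mp hx).2).1
    omega
  have hEveq2 : Ev = Be.biUnion (fun e => e ∩ Finset.Ioo j l) := by
    ext x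
    simp only [hEv, Finset.mem_inter, Finset.mem_biUnion]
    constructor
    · rintro ⟨hx1, hx2⟩
      obtain ⟨e, he, hxe⟩ := (hcove x).mp hx1
      exact ⟨e, he, ⟨hxe, hx2⟩⟩
    · rintro ⟨e, he, hx1, hx2⟩
      exact ⟨(hcove x).mpr ⟨e, he, hx1⟩, hx2⟩
  have hsum : Ev.card = ∑ e ∈ Be, (e ∩ Finset.Ioo j l).card := by
    rw [hEveq2]
    apply Finset.card_biUnion
    intro e he e' he' hne
    exact (hdisje e he e' he' hne).mono Finset.inter_subset_left Finset.inter_subset_left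
  -- Ev has odd cardinality, so some summand is odd
  have hodd : ¬ Even (∑ e ∈ Be, (e ∩ Finset.Ioo j l).card) := by
    rw [← hsum, hEvcard]
    intro h
    exact (Nat.even_add_one.mp h) hOdcardEven
  have hex : ∃ e ∈ Be, ¬ Even ((e ∩ Finset.Ioo j l).card) := by
    by_contra hc
    push_neg at hc
    exact hodd (even_sum hc)
  obtain ⟨e, he, hecard⟩ := hex
  have hle2 : (e ∩ Finset.Ioo j l).card ≤ 2 := by
    rw [← hc2e e he]
    exact Finset.card_le_card Finset.inter_subset_left
  have h1 : (e ∩ Finset.Ioo j l).card = 1 := by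
    rcases Nat.lt_or_ge (e ∩ Finset.Ioo j l).card 2 with h | h
    · interval_cases h' : (e ∩ Finset.Ioo j l).card
      · exact absurd (by simp [h']) hecard
      · rfl
    · exact absurd (by omega : (e ∩ Finset.Ioo j l).card = 2) (fun h2 => hecard (by simp [h2]))
  -- e crosses {j, l}
  obtain ⟨u, v, huv, rfl⟩ := pair_rep (hc2e e he)
  have huEn : u ∈ En n := (hcove u).mpr ⟨_, he, by simp⟩
  have hvEn : v ∈ En n := (hcove v).mpr ⟨_, he, by simp⟩
  rw [mem_En] at huEn hvEn
  have hcr : Cross {u, v} {j, l} := by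
    have hmem : ∀ x, x ∈ ({u, v} : Finset ℕ) ∩ Finset.Ioo j l ↔
        (x = u ∨ x = v) ∧ (j < x ∧ x < l) := by
      intro x
      simp [Finset.mem_inter, Finset.mem_insert, Finset.mem_singleton, Finset.mem_Ioo]
    rcases Nat.lt_or_ge u j with hu | hu
    ·
      -- then v must be inside
      have hv : j < v ∧ v < l := by
        rcases Finset.card_eq_one.mp h1 with ⟨a, ha⟩
        have haa := (hmem a).mp (by rw [ha]; exact Finset.mem_singleton_self a)
        omega
      rw [cross_pair_iff huv hjl]
      exact Or.inl ⟨by omega, by omega, by omega⟩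
    · -- u > j (u ≠ j by parity)
      have huj : j < u := by omega
      -- u must be the one inside; v outside means v > l
      have hu2 : u < l ∧ l < v := by
        rcases Finset.card_eq_one.mp h1 with ⟨a, ha⟩
        have haa := (hmem a).mp (by rw [ha]; exact Finset.mem_singleton_self a)
        rcases Nat.lt_or_ge u l with h' | h'
        · -- u inside; then v outside: v ∉ Ioo, v > u > j, v ≠ l (parity) so v > l
          have hvno : v ∉ ({u, v} : Finset ℕ) ∩ Finset.Ioo j l := by
            intro hvin
            have hu_in : u ∈ ({u, v} : Finset ℕ) ∩ Finset.Ioo j l :=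
              (hmem u).mpr ⟨Or.inl rfl, by omega, h'⟩
            rw [ha] at hvin hu_in
            rw [Finset.mem_singleton] at hvin hu_in
            omega
          have : ¬ (j < v ∧ v < l) := by
            intro hc
            exact hvno ((hmem v).mpr ⟨Or.inr rfl, hc⟩)
          have hvl : v ≠ l := by omega
          exact ⟨h', by omega⟩
        · -- u ≥ l: then u > l, both outside: contradiction with card 1
          exfalso
          have hul : l < u := by omega
          omega
      rw [cross_pair_iff huv hjl]
      exact Or.inr ⟨by omega, by omega, by omega⟩
  exact Finset.card_pos.mpr ⟨{u, v}, Finset.mem_filter.mpr ⟨he, hcr⟩⟩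
end crossed

section exactly
variable {n : ℕ} {Be Bo : Finset (Finset ℕ)}

theorem double_count :
    ∑ o ∈ Bo, (Be.filter (fun e => Cross e o)).card
      = ∑ e ∈ Be, (Bo.filter (fun o => Cross e o)).card := by
  simp only [Finset.card_filter]
  exact Finset.sum_comm

theorem exactly_one (hbb : IsBasketball n Be Bo) :
    ∀ o ∈ Bo, (Be.filter (fun e => Cross e o)).card = 1 := by
  have hBe_card : Be.card = n := by
    have h1 := matching_card hbb.1.1
    rw [En_card] at h1
    omega
  have hBo_card : Bo.card = n := by
    have h1 := matching_card hbb.2.1.1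
    rw [On_card] at h1
    omega
  apply sum_eq_card_forces (o_crossed hbb)
  rw [double_count, Finset.sum_congr rfl (fun e he => hbb.2.2 e he), Finset.sum_const,
    smul_eq_mul, mul_one, hBe_card, hBo_card]
end exactly

noncomputable def oOf (Bo : Finset (Finset ℕ)) (e : Finset ℕ) : Finset ℕ :=
  (Bo.filter (fun o => Cross e o)).biUnion (fun b => b)

theorem oOf_spec {Bo : Finset (Finset ℕ)} {e : Finset ℕ}
    (h : (Bo.filter (fun o => Cross e o)).card = 1) :
    oOf Bo e ∈ Bo ∧ Cross e (oOf Bo e) ∧ ∀ o ∈ Bo, Cross e o → o = oOf Bo e := by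
  obtain ⟨a, ha⟩ := Finset.card_eq_one.mp h
  have h2 : oOf Bo e = a := by rw [oOf, ha, Finset.singleton_biUnion]
  have h3 : a ∈ Bo.filter (fun o => Cross e o) := by rw [ha]; exact Finset.mem_singleton_self a
  rw [Finset.mem_filter] at h3
  rw [h2]
  refine ⟨h3.1, h3.2, ?_⟩
  intro o ho hco
  have : o ∈ Bo.filter (fun o => Cross e o) := Finset.mem_filter.mpr ⟨ho, hco⟩
  rw [ha, Finset.mem_singleton] at this
  exact this


noncomputable def bmap (p : Finset (Finset ℕ) × Finset (Finset ℕ)) : Finset (Finset ℕ) :=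
  p.1.image (fun e => e ∪ oOf p.2 e)

section fwd
variable {n : ℕ} {Be Bo : Finset (Finset ℕ)}

theorem bmap_mem (hmem : (Be, Bo) ∈ basketballs n) : bmap (Be, Bo) ∈ ncQuadPartitions n := by
  obtain ⟨hsubE, hsubO, hbb⟩ := mem_basketballs.mp hmem
  dsimp only at hsubE hsubO hbb
  have hone := exactly_one hbb
  have hBe_card : Be.card = n := by
    have h1 := matching_card hbb.1.1; rw [En_card] at h1; omega
  obtain ⟨⟨⟨hc2e, hdisje, hcove⟩, hnce⟩, ⟨⟨hc2o, hdisjo, hcovo⟩, hnco⟩, hcr1⟩ := hbb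
  -- element parities
  have heE : ∀ e ∈ Be, ∀ x ∈ e, x < 4*n ∧ x % 2 = 0 := by
    intro e he x hx
    exact mem_En.mp ((hcove x).mpr ⟨e, he, hx⟩)
  have hoO : ∀ o ∈ Bo, ∀ x ∈ o, x < 4*n ∧ x % 2 = 1 := by
    intro o ho x hx
    exact mem_On.mp ((hcovo x).mpr ⟨o, ho, hx⟩)
  have hdisj_eo : ∀ e ∈ Be, ∀ o ∈ Bo, Disjoint e o := by
    intro e he o ho
    rw [Finset.disjoint_left]
    intro x hxe hxo
    have h1 := (heE e he x hxe).2
    have h2 := (hoO o ho x hxo).2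
    omega
  -- oOf facts
  have hOspec : ∀ e ∈ Be, oOf Bo e ∈ Bo ∧ Cross e (oOf Bo e) ∧
      ∀ o ∈ Bo, Cross e o → o = oOf Bo e := fun e he => oOf_spec (hcr1 e he)
  have hOinj : ∀ e ∈ Be, ∀ e' ∈ Be, oOf Bo e = oOf Bo e' → e = e' := by
    intro e he e' he' h
    by_contra hne
    have h1 : e ∈ Be.filter (fun x => Cross x (oOf Bo e)) :=
      Finset.mem_filter.mpr ⟨he, (hOspec e he).2.1⟩
    have h2 : e' ∈ Be.filter (fun x => Cross x (oOf Bo e)) :=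
      Finset.mem_filter.mpr ⟨he', h ▸ (hOspec e' he').2.1⟩
    have h3 := hone (oOf Bo e) (hOspec e he).1
    have : 1 < (Be.filter (fun x => Cross x (oOf Bo e))).card :=
      Finset.one_lt_card.mpr ⟨e, h1, e', h2, hne⟩
    omega
  have hOsurj : ∀ o ∈ Bo, ∃ e ∈ Be, oOf Bo e = o := by
    intro o ho
    have h1 := hone o ho
    obtain ⟨e, he⟩ := Finset.card_eq_one.mp h1
    have h2 : e ∈ Be.filter (fun x => Cross x o) := by
      rw [he]; exact Finset.mem_singleton_self e
    rw [Finset.mem_filter] at h2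
    exact ⟨e, h2.1, ((hOspec e h2.1).2.2 o ho h2.2).symm⟩
  -- noncrossing of mixed pairs
  have hnceo : ∀ e ∈ Be, ∀ e' ∈ Be, e ≠ e' → ¬ Cross e (oOf Bo e') := by
    intro e he e' he' hne hc
    exact hne (hOinj e he e' he' ((hOspec e he).2.2 _ (hOspec e' he').1 hc).symm)
  have hb_inj : ∀ e ∈ Be, ∀ e' ∈ Be, e ∪ oOf Bo e = e' ∪ oOf Bo e' → e = e' := by
    intro e he e' he' h
    have key : ∀ a ∈ Be, (a ∪ oOf Bo a).filter (fun x => x % 2 = 0) = a := by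
      intro a ha
      ext x
      simp only [Finset.mem_filter, Finset.mem_union]
      constructor
      · rintro ⟨hx1 | hx1, hx2⟩
        · exact hx1
        · have := (hoO _ (hOspec a ha).1 x hx1).2
          omega
      · intro hx
        exact ⟨Or.inl hx, (heE a ha x hx).2⟩
    rw [← key e he, ← key e' he', h]
  rw [mem_ncQuad]
  refine ⟨?_, ⟨?_, ?_, ?_, ?_⟩, ?_, ?_⟩
  · -- blocks in range
    intro B hB
    obtain ⟨e, he, rfl⟩ := Finset.mem_image.mp hB
    intro x hx
    rcases Finset.mem_union.mp hx with h | h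
    · exact Finset.mem_range.mpr (heE e he x h).1
    · exact Finset.mem_range.mpr (hoO _ (hOspec e he).1 x h).1
  · -- nonempty
    intro B hB
    obtain ⟨e, he, rfl⟩ := Finset.mem_image.mp hB
    have : e.card = 2 := hc2e e he
    have : e.Nonempty := by rw [← Finset.card_pos]; omega
    exact this.mono Finset.subset_union_left
  · -- disjoint
    intro B hB B' hB' hne
    obtain ⟨e, he, rfl⟩ := Finset.mem_image.mp hB
    obtain ⟨e', he', rfl⟩ := Finset.mem_image.mp hB'
    have hee' : e ≠ e' := fun h => hne (by rw [h])
    have hoo' : oOf Bo e ≠ oOf Bo e' := fun h => hee' (hOinj e he e' he' h)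
    rw [Finset.disjoint_union_left, Finset.disjoint_union_right, Finset.disjoint_union_right]
    exact ⟨⟨hdisje e he e' he' hee', hdisj_eo e he _ (hOspec e' he').1⟩,
      ⟨(hdisj_eo e' he' _ (hOspec e he).1).symm, hdisjo _ (hOspec e he).1 _ (hOspec e' he').1 hoo'⟩⟩
  · -- cover
    intro x
    rw [Finset.mem_range]
    constructor
    · intro hx
      rcases Nat.even_or_odd x with hpar | hpar
      · obtain ⟨e, he, hxe⟩ := (hcove x).mp (mem_En.mpr ⟨hx, Nat.even_iff.mp hpar⟩)
        exact ⟨e ∪ oOf Bo e, Finset.mem_image_of_mem _ he,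
          Finset.mem_union_left _ hxe⟩
      · obtain ⟨o, ho, hxo⟩ := (hcovo x).mp (mem_On.mpr ⟨hx, Nat.odd_iff.mp hpar⟩)
        obtain ⟨e, he, rfl⟩ := hOsurj o ho
        exact ⟨e ∪ oOf Bo e, Finset.mem_image_of_mem _ he,
          Finset.mem_union_right _ hxo⟩
    · rintro ⟨B, hB, hxB⟩
      obtain ⟨e, he, rfl⟩ := Finset.mem_image.mp hB
      rcases Finset.mem_union.mp hxB with h | h
      · exact (heE e he x h).1
      · exact (hoO _ (hOspec e he).1 x h).1
  · -- noncrossing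
    intro B hB B' hB' hne
    obtain ⟨e, he, rfl⟩ := Finset.mem_image.mp hB
    obtain ⟨e', he', rfl⟩ := Finset.mem_image.mp hB'
    have hee' : e ≠ e' := fun h => hne (by rw [h])
    have hoo' : oOf Bo e ≠ oOf Bo e' := fun h => hee' (hOinj e he e' he' h)
    apply union_noncross (hc2e e he) (hc2o _ (hOspec e he).1) (hc2e e' he')
      (hc2o _ (hOspec e' he').1) (hOspec e he).2.1 (hOspec e' he').2.1
      (hnce e he e' he' hee') (hnceo e he e' he' hee')
      (cross_not_symm (hnceo e' he' e he (Ne.symm hee')))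
      (hnco _ (hOspec e he).1 _ (hOspec e' he').1 hoo')
  · -- card
    rw [bmap]
    simp only
    rw [Finset.card_image_of_injOn hb_inj, hBe_card]
  · -- blocks have card 4
    intro B hB
    obtain ⟨e, he, rfl⟩ := Finset.mem_image.mp hB
    rw [Finset.card_union_of_disjoint (hdisj_eo e he _ (hOspec e he).1), hc2e e he,
      hc2o _ (hOspec e he).1]
end fwd

noncomputable def evB (B : Finset ℕ) : Finset ℕ := B.filter (fun x => x % 2 = 0)
noncomputable def odB (B : Finset ℕ) : Finset ℕ := B.filter (fun x => x % 2 = 1)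

theorem evB_union_odB (B : Finset ℕ) : evB B ∪ odB B = B := by
  ext x
  simp only [evB, odB, Finset.mem_union, Finset.mem_filter]
  constructor
  · rintro (⟨h, _⟩ | ⟨h, _⟩) <;> exact h
  · intro h
    rcases Nat.mod_two_eq_zero_or_one x with h2 | h2
    · exact Or.inl ⟨h, h2⟩
    · exact Or.inr ⟨h, h2⟩

section struct
variable {n : ℕ} {Q : Finset (Finset ℕ)}

theorem gap_parity (hQ : Q ∈ ncQuadPartitions n) {B : Finset ℕ} (hB : B ∈ Q)
    {u v : ℕ} (hu : u ∈ B) (hv : v ∈ B) (huv : u < v)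
    (hcons : ∀ z ∈ B, z ≤ u ∨ v ≤ z) : v % 2 ≠ u % 2 := by
  obtain ⟨hsub, ⟨hne, hdisj, hcover, hnc⟩, hcard, h4⟩ := mem_ncQuad.mp hQ
  have hIoo : Finset.Ioo u v = (Q.filter (fun b => b ⊆ Finset.Ioo u v)).biUnion (fun b => b) := by
    ext z
    simp only [Finset.mem_biUnion, Finset.mem_filter]
    constructor
    · intro hz
      have hz' := Finset.mem_Ioo.mp hz
      have hzr : z ∈ Finset.range (4*n) := by
        have := Finset.mem_range.mp (hsub B hB hv)
        exact Finset.mem_range.mpr (by omega)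
      obtain ⟨b, hb, hzb⟩ := (hcover z).mp hzr
      have hbB : b ≠ B := by
        rintro rfl
        rcases hcons z hzb with h | h <;> omega
      refine ⟨b, ⟨hb, ?_⟩, hzb⟩
      intro y hyb
      rw [Finset.mem_Ioo]
      have hdj := hdisj b hb B hB hbB
      have hyu : y ≠ u := fun h => (Finset.disjoint_left.mp hdj (h ▸ hyb)) hu
      have hyv : y ≠ v := fun h => (Finset.disjoint_left.mp hdj (h ▸ hyb)) hv
      by_contra hy
      rw [not_and_or, not_lt, not_lt] at hy
      apply hnc b hb B hB hbB
      rcases hy with hy | hy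
      · exact Or.inl ⟨y, hyb, z, hzb, u, hu, v, hv, by omega, by omega, by omega⟩
      · exact Or.inr ⟨u, hu, v, hv, z, hzb, y, hyb, by omega, by omega, by omega⟩
    · rintro ⟨b, ⟨hb, hbsub⟩, hzb⟩
      exact hbsub hzb
  have hcard4 : (Finset.Ioo u v).card % 4 = 0 := by
    rw [hIoo, Finset.card_biUnion (fun b hb b' hb' hne' =>
      hdisj b (Finset.mem_filter.mp hb).1 b' (Finset.mem_filter.mp hb').1 hne')]
    rw [Finset.sum_congr rfl (fun b hb => h4 b (Finset.mem_filter.mp hb).1)]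
    rw [Finset.sum_const, smul_eq_mul]
    omega
  rw [Nat.card_Ioo] at hcard4
  omega

theorem block_struct (hQ : Q ∈ ncQuadPartitions n) {B : Finset ℕ} (hB : B ∈ Q) :
    (evB B).card = 2 ∧ (odB B).card = 2 ∧ Cross (evB B) (odB B) := by
  have h4 : B.card = 4 := (mem_ncQuad.mp hQ).2.2.2 B hB
  -- get sorted elements
  have hlen : (B.sort (· ≤ ·)).length = 4 := by rw [Finset.length_sort, h4]
  have hsorted : (B.sort (· ≤ ·)).Pairwise (· < ·) := (Finset.sortedLT_sort B).pairwise
  have hmem : ∀ x, x ∈ B ↔ x ∈ B.sort (· ≤ ·) := fun x => (Finset.mem_sort _).symm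
  rcases hls : B.sort (· ≤ ·) with _ | ⟨b1, _ | ⟨b2, _ | ⟨b3, _ | ⟨b4, rest⟩⟩⟩⟩ <;>
    rw [hls] at hlen <;> simp at hlen
  have hrest : rest = [] := by
    cases rest
    · rfl
    · simp at hlen
  subst hrest
  rw [hls] at hsorted hmem
  have hord : b1 < b2 ∧ b2 < b3 ∧ b3 < b4 := by
    simp only [List.pairwise_cons, List.mem_cons, List.mem_singleton, List.not_mem_nil] at hsorted
    refine ⟨?_, ?_, ?_⟩
    · exact hsorted.1 b2 (by simp)
    · exact hsorted.2.1 b3 (by simp)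
    · exact hsorted.2.2.1 b4 (by simp)
  have hmem' : ∀ x, x ∈ B ↔ (x = b1 ∨ x = b2 ∨ x = b3 ∨ x = b4) := by
    intro x
    rw [hmem x]
    simp
  obtain ⟨h12, h23, h34⟩ := hord
  -- consecutive parity alternation
  have hp12 : b2 % 2 ≠ b1 % 2 :=
    gap_parity hQ hB ((hmem' b1).mpr (by tauto)) ((hmem' b2).mpr (by tauto)) h12
      (fun z hz => by rcases (hmem' z).mp hz with rfl | rfl | rfl | rfl <;> omega)
  have hp23 : b3 % 2 ≠ b2 % 2 :=
    gap_parity hQ hB ((hmem' b2).mpr (by tauto)) ((hmem' b3).mpr (by tauto)) h23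
      (fun z hz => by rcases (hmem' z).mp hz with rfl | rfl | rfl | rfl <;> omega)
  have hp34 : b4 % 2 ≠ b3 % 2 :=
    gap_parity hQ hB ((hmem' b3).mpr (by tauto)) ((hmem' b4).mpr (by tauto)) h34
      (fun z hz => by rcases (hmem' z).mp hz with rfl | rfl | rfl | rfl <;> omega)
  rcases Nat.even_or_odd b1 with hpar | hpar
  · have hb1 : b1 % 2 = 0 := Nat.even_iff.mp hpar
    have hev : evB B = {b1, b3} := by
      ext x
      simp only [evB, Finset.mem_filter, hmem' x, Finset.mem_insert, Finset.mem_singleton]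
      omega
    have hod : odB B = {b2, b4} := by
      ext x
      simp only [odB, Finset.mem_filter, hmem' x, Finset.mem_insert, Finset.mem_singleton]
      omega
    rw [hev, hod]
    refine ⟨?_, ?_, ?_⟩
    · rw [Finset.card_insert_of_notMem (by simp; omega), Finset.card_singleton]
    · rw [Finset.card_insert_of_notMem (by simp; omega), Finset.card_singleton]
    · rw [cross_pair_iff (by omega) (by omega)]
      exact Or.inl ⟨by omega, by omega, by omega⟩
  · have hb1 : b1 % 2 = 1 := Nat.odd_iff.mp hpar
    have hev : evB B = {b2, b4} := by
      ext x
      simp only [evB, Finset.mem_filter, hmem' x, Finset.mem_insert, Finset.mem_singleton]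
      omega
    have hod : odB B = {b1, b3} := by
      ext x
      simp only [odB, Finset.mem_filter, hmem' x, Finset.mem_insert, Finset.mem_singleton]
      omega
    rw [hev, hod]
    refine ⟨?_, ?_, ?_⟩
    · rw [Finset.card_insert_of_notMem (by simp; omega), Finset.card_singleton]
    · rw [Finset.card_insert_of_notMem (by simp; omega), Finset.card_singleton]
    · rw [cross_pair_iff (by omega) (by omega)]
      exact Or.inr ⟨by omega, by omega, by omega⟩
end struct

section bwd
variable {n : ℕ} {Q : Finset (Finset ℕ)}

theorem bset_spec (hQ : Q ∈ ncQuadPartitions n) :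
    (Q.image evB, Q.image odB) ∈ basketballs n ∧ bmap (Q.image evB, Q.image odB) = Q := by
  obtain ⟨hsub, ⟨hne, hdisj, hcover, hnc⟩, hcard, h4⟩ := mem_ncQuad.mp hQ
  have hstr := fun B (hB : B ∈ Q) => block_struct hQ hB
  have hevsub : ∀ B : Finset ℕ, evB B ⊆ B := fun B => Finset.filter_subset _ B
  have hodsub : ∀ B : Finset ℕ, odB B ⊆ B := fun B => Finset.filter_subset _ B
  have hev_ne : ∀ B ∈ Q, (evB B).Nonempty := by
    intro B hB; rw [← Finset.card_pos, (hstr B hB).1]; omega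
  have hod_ne : ∀ B ∈ Q, (odB B).Nonempty := by
    intro B hB; rw [← Finset.card_pos, (hstr B hB).2.1]; omega
  have hev_inj : ∀ B ∈ Q, ∀ B' ∈ Q, evB B = evB B' → B = B' := by
    intro B hB B' hB' h
    by_contra hne'
    obtain ⟨x, hx⟩ := hev_ne B hB
    exact (Finset.disjoint_left.mp (hdisj B hB B' hB' hne') (hevsub B hx))
      (hodsub B' |> fun _ => hevsub B' (h ▸ hx))
  have hod_inj : ∀ B ∈ Q, ∀ B' ∈ Q, odB B = odB B' → B = B' := by
    intro B hB B' hB' h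
    by_contra hne'
    obtain ⟨x, hx⟩ := hod_ne B hB
    exact (Finset.disjoint_left.mp (hdisj B hB B' hB' hne') (hodsub B hx)) (hodsub B' (h ▸ hx))
  -- the key filter computation
  have hfilter : ∀ B ∈ Q, (Q.image odB).filter (fun o => Cross (evB B) o) = {odB B} := by
    intro B hB
    ext o'
    simp only [Finset.mem_filter, Finset.mem_image, Finset.mem_singleton]
    constructor
    · rintro ⟨⟨B', hB', rfl⟩, hcr⟩
      by_cases hBB' : B = B'
      · rw [hBB']
      · exfalso
        exact hnc B hB B' hB' hBB' (cross_mono (hevsub B) (hodsub B') hcr)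
    · rintro rfl
      exact ⟨⟨B, hB, rfl⟩, (hstr B hB).2.2⟩
  have hbasket : (Q.image evB, Q.image odB) ∈ basketballs n := by
    rw [mem_basketballs]
    dsimp only
    refine ⟨?_, ?_, ⟨⟨?_, ?_, ?_⟩, ?_⟩, ⟨⟨?_, ?_, ?_⟩, ?_⟩, ?_⟩
    · rintro b hb
      obtain ⟨B, hB, rfl⟩ := Finset.mem_image.mp hb
      exact (hevsub B).trans (hsub B hB)
    · rintro b hb
      obtain ⟨B, hB, rfl⟩ := Finset.mem_image.mp hb
      exact (hodsub B).trans (hsub B hB)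
    · rintro b hb
      obtain ⟨B, hB, rfl⟩ := Finset.mem_image.mp hb
      exact (hstr B hB).1
    · rintro b hb b' hb' hne'
      obtain ⟨B, hB, rfl⟩ := Finset.mem_image.mp hb
      obtain ⟨B', hB', rfl⟩ := Finset.mem_image.mp hb'
      have : B ≠ B' := fun h => hne' (by rw [h])
      exact (hdisj B hB B' hB' this).mono (hevsub B) (hevsub B')
    · intro x
      rw [mem_En]
      constructor
      · rintro ⟨hx1, hx2⟩
        obtain ⟨B, hB, hxB⟩ := (hcover x).mp (Finset.mem_range.mpr hx1)
        exact ⟨evB B, Finset.mem_image_of_mem _ hB,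
          Finset.mem_filter.mpr ⟨hxB, hx2⟩⟩
      · rintro ⟨b, hb, hxb⟩
        obtain ⟨B, hB, rfl⟩ := Finset.mem_image.mp hb
        obtain ⟨hxB, hx2⟩ := Finset.mem_filter.mp hxb
        exact ⟨Finset.mem_range.mp (hsub B hB hxB), hx2⟩
    · rintro b hb b' hb' hne' hcr
      obtain ⟨B, hB, rfl⟩ := Finset.mem_image.mp hb
      obtain ⟨B', hB', rfl⟩ := Finset.mem_image.mp hb'
      have : B ≠ B' := fun h => hne' (by rw [h])
      exact hnc B hB B' hB' this (cross_mono (hevsub B) (hevsub B') hcr)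
    · rintro b hb
      obtain ⟨B, hB, rfl⟩ := Finset.mem_image.mp hb
      exact (hstr B hB).2.1
    · rintro b hb b' hb' hne'
      obtain ⟨B, hB, rfl⟩ := Finset.mem_image.mp hb
      obtain ⟨B', hB', rfl⟩ := Finset.mem_image.mp hb'
      have : B ≠ B' := fun h => hne' (by rw [h])
      exact (hdisj B hB B' hB' this).mono (hodsub B) (hodsub B')
    · intro x
      rw [mem_On]
      constructor
      · rintro ⟨hx1, hx2⟩
        obtain ⟨B, hB, hxB⟩ := (hcover x).mp (Finset.mem_range.mpr hx1)
        exact ⟨odB B, Finset.mem_image_of_mem _ hB,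
          Finset.mem_filter.mpr ⟨hxB, hx2⟩⟩
      · rintro ⟨b, hb, hxb⟩
        obtain ⟨B, hB, rfl⟩ := Finset.mem_image.mp hb
        obtain ⟨hxB, hx2⟩ := Finset.mem_filter.mp hxb
        exact ⟨Finset.mem_range.mp (hsub B hB hxB), hx2⟩
    · rintro b hb b' hb' hne' hcr
      obtain ⟨B, hB, rfl⟩ := Finset.mem_image.mp hb
      obtain ⟨B', hB', rfl⟩ := Finset.mem_image.mp hb'
      have : B ≠ B' := fun h => hne' (by rw [h])
      exact hnc B hB B' hB' this (cross_mono (hodsub B) (hodsub B') hcr)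
    · rintro e he
      obtain ⟨B, hB, rfl⟩ := Finset.mem_image.mp he
      rw [hfilter B hB, Finset.card_singleton]
  refine ⟨hbasket, ?_⟩
  rw [bmap]
  dsimp only
  rw [Finset.image_image]
  have : ∀ B ∈ Q, ((fun e => e ∪ oOf (Q.image odB) e) ∘ evB) B = id B := by
    intro B hB
    simp only [Function.comp_apply, id_eq]
    have hoof : oOf (Q.image odB) (evB B) = odB B := by
      rw [oOf, hfilter B hB, Finset.singleton_biUnion]
    rw [hoof, evB_union_odB]
  rw [Finset.image_congr this, Finset.image_id]
end bwd

section inj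
variable {n : ℕ}

theorem bmap_recover (p : Finset (Finset ℕ) × Finset (Finset ℕ)) (hp : p ∈ basketballs n) :
    (bmap p).image evB = p.1 ∧ (bmap p).image odB = p.2 := by
  obtain ⟨Be, Bo⟩ := p
  obtain ⟨hsubE, hsubO, hbb⟩ := mem_basketballs.mp hp
  dsimp only at hsubE hsubO hbb
  have hone := exactly_one hbb
  obtain ⟨⟨⟨hc2e, hdisje, hcove⟩, hnce⟩, ⟨⟨hc2o, hdisjo, hcovo⟩, hnco⟩, hcr1⟩ := hbb
  have heE : ∀ e ∈ Be, ∀ x ∈ e, x % 2 = 0 := by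
    intro e he x hx
    exact (mem_En.mp ((hcove x).mpr ⟨e, he, hx⟩)).2
  have hoO : ∀ o ∈ Bo, ∀ x ∈ o, x % 2 = 1 := by
    intro o ho x hx
    exact (mem_On.mp ((hcovo x).mpr ⟨o, ho, hx⟩)).2
  have hOspec : ∀ e ∈ Be, oOf Bo e ∈ Bo ∧ Cross e (oOf Bo e) ∧
      ∀ o ∈ Bo, Cross e o → o = oOf Bo e := fun e he => oOf_spec (hcr1 e he)
  have hOsurj : ∀ o ∈ Bo, ∃ e ∈ Be, oOf Bo e = o := by
    intro o ho
    obtain ⟨e, he⟩ := Finset.card_eq_one.mp (hone o ho)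
    have h2 : e ∈ Be.filter (fun x => Cross x o) := by
      rw [he]; exact Finset.mem_singleton_self e
    rw [Finset.mem_filter] at h2
    exact ⟨e, h2.1, ((hOspec e h2.1).2.2 o ho h2.2).symm⟩
  have hev : ∀ e ∈ Be, evB (e ∪ oOf Bo e) = e := by
    intro e he
    ext x
    simp only [evB, Finset.mem_filter, Finset.mem_union]
    constructor
    · rintro ⟨hx1 | hx1, hx2⟩
      · exact hx1
      · have := hoO _ (hOspec e he).1 x hx1
        omega
    · intro hx
      exact ⟨Or.inl hx, heE e he x hx⟩
  have hod : ∀ e ∈ Be, odB (e ∪ oOf Bo e) = oOf Bo e := by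
    intro e he
    ext x
    simp only [odB, Finset.mem_filter, Finset.mem_union]
    constructor
    · rintro ⟨hx1 | hx1, hx2⟩
      · have := heE e he x hx1
        omega
      · exact hx1
    · intro hx
      exact ⟨Or.inr hx, hoO _ (hOspec e he).1 x hx⟩
  constructor
  · rw [bmap]
    dsimp only
    rw [Finset.image_image]
    calc Be.image (evB ∘ fun e => e ∪ oOf Bo e) = Be.image id :=
          Finset.image_congr (fun e he => hev e he)
      _ = Be := Finset.image_id
  · rw [bmap]
    dsimp only
    rw [Finset.image_image]
    have h1 : Be.image (odB ∘ fun e => e ∪ oOf Bo e) = Be.image (fun e => oOf Bo e) :=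
      Finset.image_congr (fun e he => hod e he)
    rw [h1]
    ext o
    simp only [Finset.mem_image]
    constructor
    · rintro ⟨e, he, rfl⟩
      exact (hOspec e he).1
    · intro ho
      obtain ⟨e, he, heo⟩ := hOsurj o ho
      exact ⟨e, he, heo⟩

theorem partC (n : ℕ) : (basketballs n).card = (ncQuadPartitions n).card := by
  apply Finset.card_bij (fun p _ => bmap p)
  · rintro ⟨Be, Bo⟩ hp
    exact bmap_mem hp
  · rintro p hp p' hp' h
    have h1 := bmap_recover p hp
    have h2 := bmap_recover p' hp'
    have : p.1 = p'.1 := by rw [← h1.1, ← h2.1, h]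
    have : p.2 = p'.2 := by rw [← h1.2, ← h2.2, h]
    exact Prod.ext (by rw [← h1.1, ← h2.1, h]) (by rw [← h1.2, ← h2.2, h])
  · intro Q hQ
    obtain ⟨hb, hr⟩ := bset_spec hQ
    exact ⟨(Q.image evB, Q.image odB), hb, hr⟩
end inj


theorem stmt_7 (n : ℕ) :
    (3 * n + 1) * (basketballs n).card = Nat.choose (4 * n) n ∧
    (basketballs n).card = (ncQuadPartitions n).card := by
  have hC : (basketballs n).card = (GoodW n).card := by rw [partC, partB]
  refine ⟨?_, partC n⟩
  have hA := partA n
  have h1 : Nat.choose (4*n+1) (n+1) * (n+1) = Nat.choose (4*n+1) n * (4*n+1 - n) :=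
    Nat.choose_succ_right_eq (4*n+1) n
  have h3 : 4*n+1 - n = 3*n+1 := by omega
  rw [h3] at h1
  have h2 : (4*n+1) * Nat.choose (4*n) n = Nat.choose (4*n+1) (n+1) * (n+1) := by
    have := Nat.add_one_mul_choose_eq (4*n) n
    simpa [Nat.succ_eq_add_one] using this
  have h4 : ((3*n+1) * (basketballs n).card) * (4*n+1) = (Nat.choose (4*n) n) * (4*n+1) := by
    calc ((3*n+1) * (basketballs n).card) * (4*n+1)
        = (3*n+1) * ((GoodW n).card * (4*n+1)) := by rw [hC]; ring
      _ = (3*n+1) * Nat.choose (4*n+1) n := by rw [hA]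
      _ = Nat.choose (4*n+1) n * (3*n+1) := by ring
      _ = Nat.choose (4*n+1) (n+1) * (n+1) := h1.symm
      _ = (4*n+1) * Nat.choose (4*n) n := h2.symm
      _ = Nat.choose (4*n) n * (4*n+1) := by ring
  exact Nat.eq_of_mul_eq_mul_right (by omega) h4
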